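/- arXiv:2303.02853 — 6 statements merged into one kernel-verified Lean document; each statement's English description precedes it below -/
import Mathlib

section
/- (First Rule of Triangles) Let n ≥ 3 and let A and B be the z-matrix and w-matrix of a singular sequence. Then for all 1 ≤ i < j < k ≤ n, (a_{ii} + a_{jj} + a_{kk}) (a_{ii} + a_{ij} + a_{ik}) (a_{ik} + a_{jk} + a_{kk}) (a_{ij} + a_{jj} + a_{jk}) ≠ 16. The same statement holds with A replaced by B. -/
open Filter Finset

/-- `Zq δ z k l` is the quantity `Z_{lk} = δ_{kl}^3 · (z_k − z_l)`
(and, applied to `w`, the quantity `W_{lk}`). -/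
noncomputable def Zq {n : ℕ} (δ : Fin n → Fin n → ℂ) (z : Fin n → ℂ) (k l : Fin n) : ℂ :=
  δ k l ^ 3 * (z k - z l)

/-- A singular sequence of normalized central configurations for the masses `m`:
sequences `z^{(N)}, w^{(N)} ∈ ℂ^n`, symmetric `δ^{(N)}`, and positive reals `ε_N → 0`
such that every term satisfies the central configuration equations
`z_k = ∑_{l≠k} m_l Z_{lk}`, `w_k = ∑_{l≠k} m_l W_{lk}`, the normalization
`δ_{kl}^2 z_{kl} w_{kl} = 1` (`k ≠ l`), the maximum of the `|z_k|, |Z_{kl}|`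
(resp. `|w_k|, |W_{kl}|`) equals `ε_N^{-2}`, and all the sequences
`ε_N^2 z_k, ε_N^2 w_k, ε_N^2 Z_{kl}, ε_N^2 W_{kl}` converge. -/
structure SingularSeq (n : ℕ) (m : Fin n → ℂ) : Type where
  z : ℕ → Fin n → ℂ
  w : ℕ → Fin n → ℂ
  delta : ℕ → Fin n → Fin n → ℂ
  eps : ℕ → ℝ
  eps_pos : ∀ N, 0 < eps N
  eps_lim : Tendsto eps atTop (nhds 0)
  delta_symm : ∀ N, ∀ k l : Fin n, delta N k l = delta N l k
  eq_z : ∀ N, ∀ k : Fin n, z N k = ∑ l ∈ univ.erase k, m l * Zq (delta N) (z N) k l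
  eq_w : ∀ N, ∀ k : Fin n, w N k = ∑ l ∈ univ.erase k, m l * Zq (delta N) (w N) k l
  normalize : ∀ N, ∀ k l : Fin n, k ≠ l →
    delta N k l ^ 2 * (z N l - z N k) * (w N l - w N k) = 1
  maxZ : ∀ N, IsGreatest
      ({x : ℝ | ∃ k, x = ‖z N k‖} ∪
        {x : ℝ | ∃ k l, k ≠ l ∧ x = ‖Zq (delta N) (z N) k l‖})
      (eps N ^ (-2 : ℤ))
  maxW : ∀ N, IsGreatest
      ({x : ℝ | ∃ k, x = ‖w N k‖} ∪
        {x : ℝ | ∃ k l, k ≠ l ∧ x = ‖Zq (delta N) (w N) k l‖})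
      (eps N ^ (-2 : ℤ))
  conv_z : ∀ k : Fin n, ∃ L : ℂ,
    Tendsto (fun N => (eps N : ℂ) ^ 2 * z N k) atTop (nhds L)
  conv_w : ∀ k : Fin n, ∃ L : ℂ,
    Tendsto (fun N => (eps N : ℂ) ^ 2 * w N k) atTop (nhds L)
  conv_Z : ∀ k l : Fin n, k ≠ l → ∃ L : ℂ,
    Tendsto (fun N => (eps N : ℂ) ^ 2 * Zq (delta N) (z N) k l) atTop (nhds L)
  conv_W : ∀ k l : Fin n, k ≠ l → ∃ L : ℂ,
    Tendsto (fun N => (eps N : ℂ) ^ 2 * Zq (delta N) (w N) k l) atTop (nhds L)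

/-- `A` and `B` are the z-matrix and the w-matrix of the singular sequence `S`:
symmetric `{0,1}`-matrices whose entries record which of the (convergent) sequences
`ε_N^2 z_i`, `ε_N^2 Z_{ij}` (resp. `ε_N^2 w_i`, `ε_N^2 W_{ij}`) have nonzero limit. -/
structure IsZWMatrices {n : ℕ} {m : Fin n → ℂ} (S : SingularSeq n m)
    (A B : Matrix (Fin n) (Fin n) ℕ) : Prop where
  zeroOne_A : ∀ i j, A i j = 0 ∨ A i j = 1
  symm_A : ∀ i j, A i j = A j i
  zeroOne_B : ∀ i j, B i j = 0 ∨ B i j = 1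
  symm_B : ∀ i j, B i j = B j i
  diag_A : ∀ i, A i i = 1 ↔
    ¬ Tendsto (fun N => (S.eps N : ℂ) ^ 2 * S.z N i) atTop (nhds 0)
  off_A : ∀ i j, i ≠ j → (A i j = 1 ↔
    ¬ Tendsto (fun N => (S.eps N : ℂ) ^ 2 * Zq (S.delta N) (S.z N) i j) atTop (nhds 0))
  diag_B : ∀ i, B i i = 1 ↔
    ¬ Tendsto (fun N => (S.eps N : ℂ) ^ 2 * S.w N i) atTop (nhds 0)
  off_B : ∀ i j, i ≠ j → (B i j = 1 ↔
    ¬ Tendsto (fun N => (S.eps N : ℂ) ^ 2 * Zq (S.delta N) (S.w N) i j) atTop (nhds 0))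


lemma cube_bound {t : ℝ} (ht : 0 ≤ t) : t ≤ max 1 (t ^ 3) := by
  rcases le_total t 1 with h | h
  · exact h.trans (le_max_left _ _)
  · have h2 : 1 ≤ t ^ 2 := by nlinarith
    exact le_trans (by nlinarith) (le_max_right _ _)

lemma scaled_id (e d zp zq wp wq : ℂ) (he : e ≠ 0)
    (hn : d ^ 2 * (zq - zp) * (wq - wp) = 1) :
    (e * (d ^ 3 * (zp - zq))) ^ 2 * (e * (zq - zp)) * ((wq - wp) / e) ^ 3 = 1 := by
  have h3 : (d ^ 2 * (zq - zp) * (wq - wp)) ^ 3 = 1 := by rw [hn, one_pow]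
  field_simp
  linear_combination h3

lemma key (zx zy zz wx wy wz dxy dxz dyz : ℕ → ℂ) (ε : ℕ → ℝ)
    (hε : ∀ N, 0 < ε N)
    (nxy : ∀ N, dxy N ^ 2 * (zy N - zx N) * (wy N - wx N) = 1)
    (nxz : ∀ N, dxz N ^ 2 * (zz N - zx N) * (wz N - wx N) = 1)
    (nyz : ∀ N, dyz N ^ 2 * (zz N - zy N) * (wz N - wy N) = 1)
    (hx : Tendsto (fun N => (ε N : ℂ) ^ 2 * zx N) atTop (nhds 0))
    (Ly Lz Lxy Lxz : ℂ)
    (hy : Tendsto (fun N => (ε N : ℂ) ^ 2 * zy N) atTop (nhds Ly)) (hLy : Ly ≠ 0)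
    (hz : Tendsto (fun N => (ε N : ℂ) ^ 2 * zz N) atTop (nhds Lz)) (hLz : Lz ≠ 0)
    (haxy : Tendsto (fun N => (ε N : ℂ) ^ 2 * (dxy N ^ 3 * (zx N - zy N))) atTop (nhds Lxy))
    (hLxy : Lxy ≠ 0)
    (haxz : Tendsto (fun N => (ε N : ℂ) ^ 2 * (dxz N ^ 3 * (zx N - zz N))) atTop (nhds Lxz))
    (hLxz : Lxz ≠ 0)
    (hayz : Tendsto (fun N => (ε N : ℂ) ^ 2 * (dyz N ^ 3 * (zy N - zz N))) atTop (nhds 0)) :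
    False := by
  have hE : ∀ N, ((ε N : ℂ)) ^ 2 ≠ 0 := fun N =>
    pow_ne_zero _ (by exact_mod_cast (hε N).ne')
  -- limits of scaled differences
  have hbxy : Tendsto (fun N => (ε N : ℂ) ^ 2 * (zy N - zx N)) atTop (nhds Ly) := by
    simpa [mul_sub] using hy.sub hx
  have hbxz : Tendsto (fun N => (ε N : ℂ) ^ 2 * (zz N - zx N)) atTop (nhds Lz) := by
    simpa [mul_sub] using hz.sub hx
  have hbyz : Tendsto (fun N => (ε N : ℂ) ^ 2 * (zz N - zy N)) atTop (nhds (Lz - Ly)) := by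
    simpa [mul_sub] using hz.sub hy
  -- eventual lower bounds on the "edge" quantities
  have haxy' : ∀ᶠ N in atTop,
      ‖Lxy‖ / 2 < ‖(ε N : ℂ) ^ 2 * (dxy N ^ 3 * (zx N - zy N))‖ :=
    haxy.norm.eventually (eventually_gt_nhds (half_lt_self (norm_pos_iff.mpr hLxy)))
  have haxz' : ∀ᶠ N in atTop,
      ‖Lxz‖ / 2 < ‖(ε N : ℂ) ^ 2 * (dxz N ^ 3 * (zx N - zz N))‖ :=
    haxz.norm.eventually (eventually_gt_nhds (half_lt_self (norm_pos_iff.mpr hLxz)))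
  have hbxy' : ∀ᶠ N in atTop, ‖Ly‖ / 2 < ‖(ε N : ℂ) ^ 2 * (zy N - zx N)‖ :=
    hbxy.norm.eventually (eventually_gt_nhds (half_lt_self (norm_pos_iff.mpr hLy)))
  have hbxz' : ∀ᶠ N in atTop, ‖Lz‖ / 2 < ‖(ε N : ℂ) ^ 2 * (zz N - zx N)‖ :=
    hbxz.norm.eventually (eventually_gt_nhds (half_lt_self (norm_pos_iff.mpr hLz)))
  set Pxy : ℝ := (‖Lxy‖ / 2) ^ 2 * (‖Ly‖ / 2) with hPxy
  set Pxz : ℝ := (‖Lxz‖ / 2) ^ 2 * (‖Lz‖ / 2) with hPxz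
  have hPxy0 : 0 < Pxy := by
    have := norm_pos_iff.mpr hLxy; have := norm_pos_iff.mpr hLy; positivity
  have hPxz0 : 0 < Pxz := by
    have := norm_pos_iff.mpr hLxz; have := norm_pos_iff.mpr hLz; positivity
  set Cxy : ℝ := max 1 (1 / Pxy) with hCxy
  set Cxz : ℝ := max 1 (1 / Pxz) with hCxz
  -- bound on (wy - wx)/ε²
  have hcxy : ∀ᶠ N in atTop, ‖(wy N - wx N) / (ε N : ℂ) ^ 2‖ ≤ Cxy := by
    filter_upwards [haxy', hbxy'] with N ha hb
    have hid := scaled_id ((ε N : ℂ) ^ 2) (dxy N) (zx N) (zy N) (wx N) (wy N) (hE N) (nxy N)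
    have hnorm : ‖(ε N : ℂ) ^ 2 * (dxy N ^ 3 * (zx N - zy N))‖ ^ 2 *
        ‖(ε N : ℂ) ^ 2 * (zy N - zx N)‖ * ‖(wy N - wx N) / (ε N : ℂ) ^ 2‖ ^ 3 = 1 := by
      calc _ = ‖(((ε N : ℂ) ^ 2) * (dxy N ^ 3 * (zx N - zy N))) ^ 2 *
            ((ε N : ℂ) ^ 2 * (zy N - zx N)) * ((wy N - wx N) / (ε N : ℂ) ^ 2) ^ 3‖ := by
            simp [norm_mul, norm_pow]
        _ = 1 := by rw [hid]; simp
    set a := ‖(ε N : ℂ) ^ 2 * (dxy N ^ 3 * (zx N - zy N))‖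
    set b := ‖(ε N : ℂ) ^ 2 * (zy N - zx N)‖
    set c := ‖(wy N - wx N) / (ε N : ℂ) ^ 2‖
    have hc0 : 0 ≤ c := norm_nonneg _
    have hc3 : c ^ 3 ≤ 1 / Pxy := by
      have hs : (‖Lxy‖ / 2) ^ 2 ≤ a ^ 2 := by nlinarith [norm_nonneg Lxy]
      have h1 : Pxy ≤ a ^ 2 * b := by
        rw [hPxy]; exact mul_le_mul hs hb.le (by positivity) (sq_nonneg a)
      rw [le_div_iff₀ hPxy0]
      calc c ^ 3 * Pxy ≤ c ^ 3 * (a ^ 2 * b) :=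
            mul_le_mul_of_nonneg_left h1 (pow_nonneg hc0 3)
        _ = 1 := by linear_combination hnorm
    exact (cube_bound hc0).trans (max_le_max le_rfl hc3)
  have hcxz : ∀ᶠ N in atTop, ‖(wz N - wx N) / (ε N : ℂ) ^ 2‖ ≤ Cxz := by
    filter_upwards [haxz', hbxz'] with N ha hb
    have hid := scaled_id ((ε N : ℂ) ^ 2) (dxz N) (zx N) (zz N) (wx N) (wz N) (hE N) (nxz N)
    have hnorm : ‖(ε N : ℂ) ^ 2 * (dxz N ^ 3 * (zx N - zz N))‖ ^ 2 *
        ‖(ε N : ℂ) ^ 2 * (zz N - zx N)‖ * ‖(wz N - wx N) / (ε N : ℂ) ^ 2‖ ^ 3 = 1 := by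
      calc _ = ‖(((ε N : ℂ) ^ 2) * (dxz N ^ 3 * (zx N - zz N))) ^ 2 *
            ((ε N : ℂ) ^ 2 * (zz N - zx N)) * ((wz N - wx N) / (ε N : ℂ) ^ 2) ^ 3‖ := by
            simp [norm_mul, norm_pow]
        _ = 1 := by rw [hid]; simp
    set a := ‖(ε N : ℂ) ^ 2 * (dxz N ^ 3 * (zx N - zz N))‖
    set b := ‖(ε N : ℂ) ^ 2 * (zz N - zx N)‖
    set c := ‖(wz N - wx N) / (ε N : ℂ) ^ 2‖
    have hc0 : 0 ≤ c := norm_nonneg _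
    have hc3 : c ^ 3 ≤ 1 / Pxz := by
      have hs : (‖Lxz‖ / 2) ^ 2 ≤ a ^ 2 := by nlinarith [norm_nonneg Lxz]
      have h1 : Pxz ≤ a ^ 2 * b := by
        rw [hPxz]; exact mul_le_mul hs hb.le (by positivity) (sq_nonneg a)
      rw [le_div_iff₀ hPxz0]
      calc c ^ 3 * Pxz ≤ c ^ 3 * (a ^ 2 * b) :=
            mul_le_mul_of_nonneg_left h1 (pow_nonneg hc0 3)
        _ = 1 := by linear_combination hnorm
    exact (cube_bound hc0).trans (max_le_max le_rfl hc3)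
  set C : ℝ := Cxy + Cxz with hC
  have hC0 : 0 < C := by
    have : (1:ℝ) ≤ Cxy := le_max_left _ _
    have : (1:ℝ) ≤ Cxz := le_max_left _ _
    positivity
  set D : ℝ := ‖Lz - Ly‖ + 1 with hD
  have hD0 : 0 < D := by positivity
  have hbD : ∀ᶠ N in atTop, ‖(ε N : ℂ) ^ 2 * (zz N - zy N)‖ ≤ D :=
    (hbyz.norm.eventually (eventually_lt_nhds (lt_add_one _))).mono fun N h => h.le
  have hsmall : ∀ᶠ N in atTop,
      ‖(ε N : ℂ) ^ 2 * (dyz N ^ 3 * (zy N - zz N))‖ ^ 2 * D * C ^ 3 < 1 := by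
    have h0 : Tendsto (fun N => ‖(ε N : ℂ) ^ 2 * (dyz N ^ 3 * (zy N - zz N))‖ ^ 2 * D * C ^ 3)
        atTop (nhds 0) := by
      have := ((hayz.norm.pow 2).mul_const D).mul_const (C ^ 3)
      simpa using this
    exact h0.eventually (eventually_lt_nhds one_pos)
  obtain ⟨N, h1, h2, h3, h4⟩ := (hcxy.and (hcxz.and (hbD.and hsmall))).exists
  -- final contradiction at index N
  have hid := scaled_id ((ε N : ℂ) ^ 2) (dyz N) (zy N) (zz N) (wy N) (wz N) (hE N) (nyz N)
  have hnorm : ‖(ε N : ℂ) ^ 2 * (dyz N ^ 3 * (zy N - zz N))‖ ^ 2 *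
      ‖(ε N : ℂ) ^ 2 * (zz N - zy N)‖ * ‖(wz N - wy N) / (ε N : ℂ) ^ 2‖ ^ 3 = 1 := by
    calc _ = ‖(((ε N : ℂ) ^ 2) * (dyz N ^ 3 * (zy N - zz N))) ^ 2 *
          ((ε N : ℂ) ^ 2 * (zz N - zy N)) * ((wz N - wy N) / (ε N : ℂ) ^ 2) ^ 3‖ := by
          simp [norm_mul, norm_pow]
      _ = 1 := by rw [hid]; simp
  have hcC : ‖(wz N - wy N) / (ε N : ℂ) ^ 2‖ ≤ C := by
    have hsplit : (wz N - wy N) / (ε N : ℂ) ^ 2 =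
        (wz N - wx N) / (ε N : ℂ) ^ 2 - (wy N - wx N) / (ε N : ℂ) ^ 2 := by ring
    rw [hsplit]
    exact (norm_sub_le _ _).trans (by rw [hC]; linarith)
  set a := ‖(ε N : ℂ) ^ 2 * (dyz N ^ 3 * (zy N - zz N))‖
  set b := ‖(ε N : ℂ) ^ 2 * (zz N - zy N)‖
  set c := ‖(wz N - wy N) / (ε N : ℂ) ^ 2‖
  have ha0 : 0 ≤ a := norm_nonneg _
  have hb0 : 0 ≤ b := norm_nonneg _
  have hc0 : 0 ≤ c := norm_nonneg _
  have hc3 : c ^ 3 ≤ C ^ 3 := pow_le_pow_left₀ hc0 hcC 3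
  have e2 : a ^ 2 * b * c ^ 3 ≤ a ^ 2 * D * C ^ 3 := by
    have s1 : a ^ 2 * b ≤ a ^ 2 * D := mul_le_mul_of_nonneg_left h3 (sq_nonneg a)
    exact mul_le_mul s1 hc3 (pow_nonneg hc0 3) (by positivity)
  linarith [hnorm, e2, h4]


lemma combo {d1 d2 d3 e12 e13 e23 : ℕ}
    (h1 : d1 ≤ 1) (h2 : d2 ≤ 1) (h3 : d3 ≤ 1)
    (h4 : e12 ≤ 1) (h5 : e13 ≤ 1) (h6 : e23 ≤ 1)
    (hP : (d1 + d2 + d3) * (d1 + e12 + e13) * (e13 + e23 + d3) * (e12 + d2 + e23) = 16) :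
    (d1 = 0 ∧ d2 = 1 ∧ d3 = 1 ∧ e12 = 1 ∧ e13 = 1 ∧ e23 = 0) ∨
    (d2 = 0 ∧ d1 = 1 ∧ d3 = 1 ∧ e12 = 1 ∧ e23 = 1 ∧ e13 = 0) ∨
    (d3 = 0 ∧ d1 = 1 ∧ d2 = 1 ∧ e13 = 1 ∧ e23 = 1 ∧ e12 = 0) := by
  interval_cases d1 <;> interval_cases d2 <;> interval_cases d3 <;>
    interval_cases e12 <;> interval_cases e13 <;> interval_cases e23 <;> omega

lemma hub_false {n : ℕ} (zf wf : ℕ → Fin n → ℂ) (δ : ℕ → Fin n → Fin n → ℂ) (ε : ℕ → ℝ)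
    (hε : ∀ N, 0 < ε N)
    (hnorm : ∀ N, ∀ k l : Fin n, k ≠ l →
      δ N k l ^ 2 * (zf N l - zf N k) * (wf N l - wf N k) = 1)
    (convz : ∀ k : Fin n, ∃ L : ℂ,
      Tendsto (fun N => (ε N : ℂ) ^ 2 * zf N k) atTop (nhds L))
    (convZ : ∀ k l : Fin n, k ≠ l → ∃ L : ℂ,
      Tendsto (fun N => (ε N : ℂ) ^ 2 * Zq (δ N) (zf N) k l) atTop (nhds L))
    (x y z : Fin n) (hxy : x ≠ y) (hxz : x ≠ z) (hyz : y ≠ z)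
    (hx : Tendsto (fun N => (ε N : ℂ) ^ 2 * zf N x) atTop (nhds 0))
    (hy : ¬ Tendsto (fun N => (ε N : ℂ) ^ 2 * zf N y) atTop (nhds 0))
    (hz : ¬ Tendsto (fun N => (ε N : ℂ) ^ 2 * zf N z) atTop (nhds 0))
    (hexy : ¬ Tendsto (fun N => (ε N : ℂ) ^ 2 * Zq (δ N) (zf N) x y) atTop (nhds 0))
    (hexz : ¬ Tendsto (fun N => (ε N : ℂ) ^ 2 * Zq (δ N) (zf N) x z) atTop (nhds 0))
    (heyz : Tendsto (fun N => (ε N : ℂ) ^ 2 * Zq (δ N) (zf N) y z) atTop (nhds 0)) :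
    False := by
  obtain ⟨Ly, hLy⟩ := convz y
  have hLy0 : Ly ≠ 0 := by rintro rfl; exact hy hLy
  obtain ⟨Lz, hLz⟩ := convz z
  have hLz0 : Lz ≠ 0 := by rintro rfl; exact hz hLz
  obtain ⟨Lxy, hLxy⟩ := convZ x y hxy
  have hLxy0 : Lxy ≠ 0 := by rintro rfl; exact hexy hLxy
  obtain ⟨Lxz, hLxz⟩ := convZ x z hxz
  have hLxz0 : Lxz ≠ 0 := by rintro rfl; exact hexz hLxz
  exact key (fun N => zf N x) (fun N => zf N y) (fun N => zf N z)
    (fun N => wf N x) (fun N => wf N y) (fun N => wf N z)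
    (fun N => δ N x y) (fun N => δ N x z) (fun N => δ N y z) ε hε
    (fun N => hnorm N x y hxy) (fun N => hnorm N x z hxz) (fun N => hnorm N y z hyz)
    hx Ly Lz Lxy Lxz hLy hLy0 hLz hLz0
    (by simpa only [Zq] using hLxy) hLxy0
    (by simpa only [Zq] using hLxz) hLxz0
    (by simpa only [Zq] using heyz)

theorem first_rule_of_triangles (n : ℕ) (hn : 3 ≤ n) (m : Fin n → ℂ)
    (hm : ∀ I : Finset (Fin n), I.Nonempty → ∑ k ∈ I, m k ≠ 0)
    (S : SingularSeq n m) (A B : Matrix (Fin n) (Fin n) ℕ)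
    (hAB : IsZWMatrices S A B) :
    ∀ i j k : Fin n, i < j → j < k →
      (A i i + A j j + A k k) * (A i i + A i j + A i k) *
          (A i k + A j k + A k k) * (A i j + A j j + A j k) ≠ 16 ∧
      (B i i + B j j + B k k) * (B i i + B i j + B i k) *
          (B i k + B j k + B k k) * (B i j + B j j + B j k) ≠ 16 := by
  intro i j k hij hjk
  have hij' : i ≠ j := ne_of_lt hij
  have hjk' : j ≠ k := ne_of_lt hjk
  have hik' : i ≠ k := ne_of_lt (hij.trans hjk)
  have hnormB : ∀ N, ∀ k l : Fin n, k ≠ l →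
      S.delta N k l ^ 2 * (S.w N l - S.w N k) * (S.z N l - S.z N k) = 1 :=
    fun N k l h => by linear_combination S.normalize N k l h
  constructor
  · intro hP
    have le1 : ∀ p q, A p q ≤ 1 := fun p q => by
      rcases hAB.zeroOne_A p q with h | h <;> omega
    have d0 : ∀ p, A p p = 0 →
        Tendsto (fun N => (S.eps N : ℂ) ^ 2 * S.z N p) atTop (nhds 0) := fun p h =>
      not_not.mp (fun hc => by have := (hAB.diag_A p).mpr hc; omega)
    have e0 : ∀ p q, p ≠ q → A p q = 0 →
        Tendsto (fun N => (S.eps N : ℂ) ^ 2 * Zq (S.delta N) (S.z N) p q) atTop (nhds 0) :=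
      fun p q hpq h =>
      not_not.mp (fun hc => by have := (hAB.off_A p q hpq).mpr hc; omega)
    rcases combo (le1 i i) (le1 j j) (le1 k k) (le1 i j) (le1 i k) (le1 j k) hP with
      ⟨h1, h2, h3, h4, h5, h6⟩ | ⟨h1, h2, h3, h4, h5, h6⟩ | ⟨h1, h2, h3, h4, h5, h6⟩
    · exact hub_false S.z S.w S.delta S.eps S.eps_pos S.normalize S.conv_z S.conv_Z
        i j k hij' hik' hjk' (d0 i h1)
        ((hAB.diag_A j).mp h2) ((hAB.diag_A k).mp h3)
        ((hAB.off_A i j hij').mp h4) ((hAB.off_A i k hik').mp h5)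
        (e0 j k hjk' h6)
    · exact hub_false S.z S.w S.delta S.eps S.eps_pos S.normalize S.conv_z S.conv_Z
        j i k hij'.symm hjk' hik' (d0 j h1)
        ((hAB.diag_A i).mp h2) ((hAB.diag_A k).mp h3)
        ((hAB.off_A j i hij'.symm).mp ((hAB.symm_A j i).trans h4))
        ((hAB.off_A j k hjk').mp h5)
        (e0 i k hik' h6)
    · exact hub_false S.z S.w S.delta S.eps S.eps_pos S.normalize S.conv_z S.conv_Z
        k i j hik'.symm hjk'.symm hij' (d0 k h1)
        ((hAB.diag_A i).mp h2) ((hAB.diag_A j).mp h3)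
        ((hAB.off_A k i hik'.symm).mp ((hAB.symm_A k i).trans h4))
        ((hAB.off_A k j hjk'.symm).mp ((hAB.symm_A k j).trans h5))
        (e0 i j hij' h6)
  · intro hP
    have le1 : ∀ p q, B p q ≤ 1 := fun p q => by
      rcases hAB.zeroOne_B p q with h | h <;> omega
    have d0 : ∀ p, B p p = 0 →
        Tendsto (fun N => (S.eps N : ℂ) ^ 2 * S.w N p) atTop (nhds 0) := fun p h =>
      not_not.mp (fun hc => by have := (hAB.diag_B p).mpr hc; omega)
    have e0 : ∀ p q, p ≠ q → B p q = 0 →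
        Tendsto (fun N => (S.eps N : ℂ) ^ 2 * Zq (S.delta N) (S.w N) p q) atTop (nhds 0) :=
      fun p q hpq h =>
      not_not.mp (fun hc => by have := (hAB.off_B p q hpq).mpr hc; omega)
    rcases combo (le1 i i) (le1 j j) (le1 k k) (le1 i j) (le1 i k) (le1 j k) hP with
      ⟨h1, h2, h3, h4, h5, h6⟩ | ⟨h1, h2, h3, h4, h5, h6⟩ | ⟨h1, h2, h3, h4, h5, h6⟩
    · exact hub_false S.w S.z S.delta S.eps S.eps_pos hnormB S.conv_w S.conv_W
        i j k hij' hik' hjk' (d0 i h1)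
        ((hAB.diag_B j).mp h2) ((hAB.diag_B k).mp h3)
        ((hAB.off_B i j hij').mp h4) ((hAB.off_B i k hik').mp h5)
        (e0 j k hjk' h6)
    · exact hub_false S.w S.z S.delta S.eps S.eps_pos hnormB S.conv_w S.conv_W
        j i k hij'.symm hjk' hik' (d0 j h1)
        ((hAB.diag_B i).mp h2) ((hAB.diag_B k).mp h3)
        ((hAB.off_B j i hij'.symm).mp ((hAB.symm_B j i).trans h4))
        ((hAB.off_B j k hjk').mp h5)
        (e0 i k hik' h6)
    · exact hub_false S.w S.z S.delta S.eps S.eps_pos hnormB S.conv_w S.conv_W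
        k i j hik'.symm hjk'.symm hij' (d0 k h1)
        ((hAB.diag_B i).mp h2) ((hAB.diag_B j).mp h3)
        ((hAB.off_B k i hik'.symm).mp ((hAB.symm_B k i).trans h4))
        ((hAB.off_B k j hjk'.symm).mp ((hAB.symm_B k j).trans h5))
        (e0 i j hij' h6)
end

section
/- (Second Rule of Triangles) Let n ≥ 3 and let A and B be the z-matrix and w-matrix of a singular sequence. Then for all 1 ≤ i < j < k ≤ n, (a_{ii} + a_{ij} + a_{ik} + a_{jj} + a_{jk} + a_{kk}) · m_{i,j,k} ≠ 9, where m_{i,j,k} = max{ a_{ii} + a_{ij} + a_{ik}, a_{ji} + a_{jj} + a_{jk}, a_{ki} + a_{kj} + a_{kk} }. The same statement holds with A replaced by B. -/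
open Filter Finset

private lemma cube_le_cube {x y : ℝ} (hy : 0 ≤ y) (h : x ^ 3 ≤ y ^ 3) : x ≤ y := by
  by_contra h'; push_neg at h'
  exact absurd h (not_le.mpr (pow_lt_pow_left₀ h' hy (by norm_num)))

private lemma pointwise (e : ℝ) (he : 0 < e)
    (zp zq zr wp wq wr dpq dpr dqr : ℂ)
    (hpq : dpq ^ 2 * (zq - zp) * (wq - wp) = 1)
    (hpr : dpr ^ 2 * (zr - zp) * (wr - wp) = 1)
    (hqr : dqr ^ 2 * (zr - zq) * (wr - wq) = 1)
    (hb : ‖(e : ℂ) ^ 2 * (dqr ^ 3 * (zq - zr))‖ ≤ 1)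
    (ch Zh Zh' K K' : ℝ) (hch : 0 < ch) (hZh : 0 < Zh) (hZh' : 0 < Zh')
    (hKpos : 0 < K) (hK'pos : 0 < K')
    (hK : 1 ≤ Zh ^ 2 * ch * K ^ 3) (hK' : 1 ≤ Zh' ^ 2 * ch * K' ^ 3)
    (E1 : ch ≤ ‖(e : ℂ) ^ 2 * (zq - zp)‖)
    (E2 : Zh ≤ ‖(e : ℂ) ^ 2 * (dpq ^ 3 * (zp - zq))‖)
    (E3 : ch ≤ ‖(e : ℂ) ^ 2 * (zr - zp)‖)
    (E4 : Zh' ≤ ‖(e : ℂ) ^ 2 * (dpr ^ 3 * (zp - zr))‖)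
    (E5 : ‖(e : ℂ) ^ 2 * (zq - zr)‖ * (K + K') ^ 3 < 1) : False := by
  have mabs : ∀ x : ℂ, ‖(e : ℂ) ^ 2 * x‖ = e ^ 2 * ‖x‖ := fun x => by
    rw [norm_mul, norm_pow, Complex.norm_real, Real.norm_of_nonneg he.le]
  rw [mabs] at hb E1 E2 E3 E4 E5
  -- abbreviations
  set P1 := ‖dpq ^ 3 * (zp - zq)‖ with hP1def
  set P2 := ‖dpr ^ 3 * (zp - zr)‖ with hP2def
  set P3 := ‖dqr ^ 3 * (zq - zr)‖ with hP3def
  set A1 := ‖zq - zp‖ with hA1def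
  set A2 := ‖zr - zp‖ with hA2def
  set A3 := ‖zq - zr‖ with hA3def
  set W1 := ‖wq - wp‖ with hW1def
  set W2 := ‖wr - wp‖ with hW2def
  set W3 := ‖wr - wq‖ with hW3def
  have hP1n : 0 ≤ P1 := norm_nonneg _
  have hP2n : 0 ≤ P2 := norm_nonneg _
  have hP3n : 0 ≤ P3 := norm_nonneg _
  have hA1n : 0 ≤ A1 := norm_nonneg _
  have hA2n : 0 ≤ A2 := norm_nonneg _
  have hA3n : 0 ≤ A3 := norm_nonneg _
  have hW1n : 0 ≤ W1 := norm_nonneg _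
  have hW2n : 0 ≤ W2 := norm_nonneg _
  have hW3n : 0 ≤ W3 := norm_nonneg _
  -- identity 1
  have id1 : (dpq ^ 3 * (zp - zq)) ^ 2 * ((zq - zp) * (wq - wp) ^ 3) = 1 := by
    have h : (dpq ^ 3 * (zp - zq)) ^ 2 * ((zq - zp) * (wq - wp) ^ 3)
        = (dpq ^ 2 * (zq - zp) * (wq - wp)) ^ 3 := by ring
    rw [h, hpq, one_pow]
  have habs1 : P1 ^ 2 * (A1 * W1 ^ 3) = 1 := by
    have := congrArg (fun x : ℂ => ‖x‖) id1
    simpa [norm_mul, norm_pow, hP1def, hA1def, hW1def] using this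
  have id2 : (dpr ^ 3 * (zp - zr)) ^ 2 * ((zr - zp) * (wr - wp) ^ 3) = 1 := by
    have h : (dpr ^ 3 * (zp - zr)) ^ 2 * ((zr - zp) * (wr - wp) ^ 3)
        = (dpr ^ 2 * (zr - zp) * (wr - wp)) ^ 3 := by ring
    rw [h, hpr, one_pow]
  have habs2 : P2 ^ 2 * (A2 * W2 ^ 3) = 1 := by
    have := congrArg (fun x : ℂ => ‖x‖) id2
    simpa [norm_mul, norm_pow, hP2def, hA2def, hW2def] using this
  have id3 : (dqr ^ 3 * (zq - zr)) ^ 2 * ((zr - zq) * (wr - wq) ^ 3) = 1 := by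
    have h : (dqr ^ 3 * (zq - zr)) ^ 2 * ((zr - zq) * (wr - wq) ^ 3)
        = (dqr ^ 2 * (zr - zq) * (wr - wq)) ^ 3 := by ring
    rw [h, hqr, one_pow]
  have habs3 : P3 ^ 2 * (A3 * W3 ^ 3) = 1 := by
    have := congrArg (fun x : ℂ => ‖x‖) id3
    have hc : ‖zr - zq‖ = A3 := norm_sub_rev zr zq
    simpa [norm_mul, norm_pow, hc, hP3def, hW3def] using this
  -- bound W1
  have s1 : Zh ^ 2 ≤ (e ^ 2 * P1) ^ 2 := pow_le_pow_left₀ hZh.le E2 2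
  have s2 : Zh ^ 2 * ch ≤ (e ^ 2 * P1) ^ 2 * (e ^ 2 * A1) :=
    mul_le_mul s1 E1 hch.le (by positivity)
  have s3 : Zh ^ 2 * ch * W1 ^ 3 ≤ e ^ 6 := by
    calc Zh ^ 2 * ch * W1 ^ 3 ≤ (e ^ 2 * P1) ^ 2 * (e ^ 2 * A1) * W1 ^ 3 :=
          mul_le_mul_of_nonneg_right s2 (by positivity)
      _ = e ^ 6 * (P1 ^ 2 * (A1 * W1 ^ 3)) := by ring
      _ = e ^ 6 := by rw [habs1, mul_one]
  have hW1 : W1 ≤ e ^ 2 * K := by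
    apply cube_le_cube (by positivity)
    calc W1 ^ 3 ≤ W1 ^ 3 * (Zh ^ 2 * ch * K ^ 3) := le_mul_of_one_le_right (by positivity) hK
      _ = (Zh ^ 2 * ch * W1 ^ 3) * K ^ 3 := by ring
      _ ≤ e ^ 6 * K ^ 3 := mul_le_mul_of_nonneg_right s3 (by positivity)
      _ = (e ^ 2 * K) ^ 3 := by ring
  have s1' : Zh' ^ 2 ≤ (e ^ 2 * P2) ^ 2 := pow_le_pow_left₀ hZh'.le E4 2
  have s2' : Zh' ^ 2 * ch ≤ (e ^ 2 * P2) ^ 2 * (e ^ 2 * A2) :=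
    mul_le_mul s1' E3 hch.le (by positivity)
  have s3' : Zh' ^ 2 * ch * W2 ^ 3 ≤ e ^ 6 := by
    calc Zh' ^ 2 * ch * W2 ^ 3 ≤ (e ^ 2 * P2) ^ 2 * (e ^ 2 * A2) * W2 ^ 3 :=
          mul_le_mul_of_nonneg_right s2' (by positivity)
      _ = e ^ 6 * (P2 ^ 2 * (A2 * W2 ^ 3)) := by ring
      _ = e ^ 6 := by rw [habs2, mul_one]
  have hW2 : W2 ≤ e ^ 2 * K' := by
    apply cube_le_cube (by positivity)
    calc W2 ^ 3 ≤ W2 ^ 3 * (Zh' ^ 2 * ch * K' ^ 3) := le_mul_of_one_le_right (by positivity) hK'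
      _ = (Zh' ^ 2 * ch * W2 ^ 3) * K' ^ 3 := by ring
      _ ≤ e ^ 6 * K' ^ 3 := mul_le_mul_of_nonneg_right s3' (by positivity)
      _ = (e ^ 2 * K') ^ 3 := by ring
  have hW3 : W3 ≤ e ^ 2 * (K + K') := by
    calc W3 ≤ ‖wr - wp‖ + ‖wp - wq‖ := norm_sub_le_norm_sub_add_norm_sub wr wp wq
      _ = W2 + W1 := by rw [norm_sub_rev wp wq]
      _ ≤ e ^ 2 * K' + e ^ 2 * K := add_le_add hW2 hW1
      _ = e ^ 2 * (K + K') := by ring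
  -- final contradiction
  have f2 : (e ^ 2 * P3) ^ 2 ≤ 1 := pow_le_one₀ (by positivity) hb
  have f3 : e ^ 4 ≤ A3 * W3 ^ 3 := by
    calc e ^ 4 = (e ^ 2 * P3) ^ 2 * (A3 * W3 ^ 3) := by
          rw [show (e ^ 2 * P3) ^ 2 * (A3 * W3 ^ 3) = e ^ 4 * (P3 ^ 2 * (A3 * W3 ^ 3)) by ring,
            habs3, mul_one]
      _ ≤ 1 * (A3 * W3 ^ 3) := mul_le_mul_of_nonneg_right f2 (by positivity)
      _ = A3 * W3 ^ 3 := one_mul _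
  have f4 : A3 * W3 ^ 3 ≤ A3 * (e ^ 2 * (K + K')) ^ 3 :=
    mul_le_mul_of_nonneg_left (pow_le_pow_left₀ hW3n hW3 3) hA3n
  have f6 : e ^ 4 * (e ^ 2 * A3 * (K + K') ^ 3) < e ^ 4 * 1 :=
    mul_lt_mul_of_pos_left E5 (by positivity)
  have f5 : A3 * (e ^ 2 * (K + K')) ^ 3 = e ^ 4 * (e ^ 2 * A3 * (K + K') ^ 3) := by ring
  rw [mul_one] at f6
  linarith [f3, f4, f6, f5.le, f5.ge]

private lemma key_s10 (eps : ℕ → ℝ) (heps : ∀ N, 0 < eps N)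
    (zp zq zr wp wq wr : ℕ → ℂ) (dpq dpr dqr : ℕ → ℂ)
    (hpq : ∀ N, dpq N ^ 2 * (zq N - zp N) * (wq N - wp N) = 1)
    (hpr : ∀ N, dpr N ^ 2 * (zr N - zp N) * (wr N - wp N) = 1)
    (hqr : ∀ N, dqr N ^ 2 * (zr N - zq N) * (wr N - wq N) = 1)
    (hb : ∀ N, ‖(eps N : ℂ) ^ 2 * (dqr N ^ 3 * (zq N - zr N))‖ ≤ 1)
    {c Z1 Z2 : ℂ} (hc : c ≠ 0) (hZ1 : Z1 ≠ 0) (hZ2 : Z2 ≠ 0)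
    (hzp : Tendsto (fun N => (eps N : ℂ) ^ 2 * zp N) atTop (nhds c))
    (hzq : Tendsto (fun N => (eps N : ℂ) ^ 2 * zq N) atTop (nhds 0))
    (hzr : Tendsto (fun N => (eps N : ℂ) ^ 2 * zr N) atTop (nhds 0))
    (hZpq : Tendsto (fun N => (eps N : ℂ) ^ 2 * (dpq N ^ 3 * (zp N - zq N))) atTop (nhds Z1))
    (hZpr : Tendsto (fun N => (eps N : ℂ) ^ 2 * (dpr N ^ 3 * (zp N - zr N))) atTop (nhds Z2)) :
    False := by
  -- abs limits
  have habs : ∀ (f : ℕ → ℂ) (L : ℂ), Tendsto f atTop (nhds L) →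
      Tendsto (fun N => ‖f N‖) atTop (nhds (‖L‖)) := fun f L h => by
    simpa using h.norm
  set ch := ‖c‖ / 2 with hchdef
  set Zh := ‖Z1‖ / 2 with hZhdef
  set Zh' := ‖Z2‖ / 2 with hZh'def
  have hch : 0 < ch := by simpa [hchdef] using (norm_pos_iff.mpr hc)
  have hZh : 0 < Zh := by simpa [hZhdef] using (norm_pos_iff.mpr hZ1)
  have hZh' : 0 < Zh' := by simpa [hZh'def] using (norm_pos_iff.mpr hZ2)
  set K := max 1 ((Zh ^ 2 * ch)⁻¹) with hKdef
  set K' := max 1 ((Zh' ^ 2 * ch)⁻¹) with hK'def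
  have hK1 : (1:ℝ) ≤ K := le_max_left _ _
  have hK1' : (1:ℝ) ≤ K' := le_max_left _ _
  have hKpos : (0:ℝ) < K := lt_of_lt_of_le one_pos hK1
  have hK'pos : (0:ℝ) < K' := lt_of_lt_of_le one_pos hK1'
  have hK : 1 ≤ Zh ^ 2 * ch * K ^ 3 := by
    have h1 : (Zh ^ 2 * ch)⁻¹ ≤ K := le_max_right _ _
    have h2 : 0 < Zh ^ 2 * ch := by positivity
    have h3 : 1 ≤ Zh ^ 2 * ch * K := by
      rw [← mul_inv_cancel₀ h2.ne']
      exact mul_le_mul_of_nonneg_left h1 h2.le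
    have h4 : K ≤ K ^ 3 := le_self_pow₀ hK1 (by norm_num)
    nlinarith [mul_le_mul_of_nonneg_left h4 h2.le]
  have hK' : 1 ≤ Zh' ^ 2 * ch * K' ^ 3 := by
    have h1 : (Zh' ^ 2 * ch)⁻¹ ≤ K' := le_max_right _ _
    have h2 : 0 < Zh' ^ 2 * ch := by positivity
    have h3 : 1 ≤ Zh' ^ 2 * ch * K' := by
      rw [← mul_inv_cancel₀ h2.ne']
      exact mul_le_mul_of_nonneg_left h1 h2.le
    have h4 : K' ≤ K' ^ 3 := le_self_pow₀ hK1' (by norm_num)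
    nlinarith [mul_le_mul_of_nonneg_left h4 h2.le]
  -- eventual bounds
  have hzqp : Tendsto (fun N => (eps N : ℂ) ^ 2 * (zq N - zp N)) atTop (nhds (0 - c)) :=
    (hzq.sub hzp).congr fun N => by ring
  have hzrp : Tendsto (fun N => (eps N : ℂ) ^ 2 * (zr N - zp N)) atTop (nhds (0 - c)) :=
    (hzr.sub hzp).congr fun N => by ring
  have hzqr : Tendsto (fun N => (eps N : ℂ) ^ 2 * (zq N - zr N)) atTop (nhds (0 - 0)) :=
    (hzq.sub hzr).congr fun N => by ring
  have E1 : ∀ᶠ N in atTop, ch ≤ ‖(eps N : ℂ) ^ 2 * (zq N - zp N)‖ := by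
    refine ((habs _ _ hzqp).eventually (eventually_gt_nhds ?_)).mono fun N h => h.le
    simp [hchdef, norm_pos_iff.mpr hc]
  have E3 : ∀ᶠ N in atTop, ch ≤ ‖(eps N : ℂ) ^ 2 * (zr N - zp N)‖ := by
    refine ((habs _ _ hzrp).eventually (eventually_gt_nhds ?_)).mono fun N h => h.le
    simp [hchdef, norm_pos_iff.mpr hc]
  have E2 : ∀ᶠ N in atTop, Zh ≤ ‖(eps N : ℂ) ^ 2 * (dpq N ^ 3 * (zp N - zq N))‖ := by
    refine ((habs _ _ hZpq).eventually (eventually_gt_nhds ?_)).mono fun N h => h.le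
    simp [hZhdef, norm_pos_iff.mpr hZ1]
  have E4 : ∀ᶠ N in atTop, Zh' ≤ ‖(eps N : ℂ) ^ 2 * (dpr N ^ 3 * (zp N - zr N))‖ := by
    refine ((habs _ _ hZpr).eventually (eventually_gt_nhds ?_)).mono fun N h => h.le
    simp [hZh'def, norm_pos_iff.mpr hZ2]
  have E5 : ∀ᶠ N in atTop,
      ‖(eps N : ℂ) ^ 2 * (zq N - zr N)‖ * (K + K') ^ 3 < 1 := by
    have h0 : Tendsto (fun N => ‖(eps N : ℂ) ^ 2 * (zq N - zr N)‖ * (K + K') ^ 3)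
        atTop (nhds (‖(0 : ℂ) - 0‖ * (K + K') ^ 3)) := (habs _ _ hzqr).mul_const _
    refine h0.eventually (eventually_lt_nhds ?_)
    simp
  obtain ⟨N, h1, h3, h2, h4, h5⟩ := (E1.and (E3.and (E2.and (E4.and E5)))).exists
  exact pointwise (eps N) (heps N) (zp N) (zq N) (zr N) (wp N) (wq N) (wr N)
    (dpq N) (dpr N) (dqr N) (hpq N) (hpr N) (hqr N) (hb N) ch Zh Zh' K K'
    hch hZh hZh' hKpos hK'pos hK hK' h1 h2 h3 h4 h5

private lemma noFullRow {n : ℕ} (eps : ℕ → ℝ) (heps : ∀ N, 0 < eps N)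
    (z w : ℕ → Fin n → ℂ) (delta : ℕ → Fin n → Fin n → ℂ)
    (hnorm : ∀ N, ∀ k l : Fin n, k ≠ l →
      delta N k l ^ 2 * (z N l - z N k) * (w N l - w N k) = 1)
    (hbound : ∀ N, ∀ k l : Fin n, k ≠ l →
      ‖(eps N : ℂ) ^ 2 * Zq (delta N) (z N) k l‖ ≤ 1)
    (conv_z : ∀ k : Fin n, ∃ L : ℂ,
      Tendsto (fun N => (eps N : ℂ) ^ 2 * z N k) atTop (nhds L))
    (conv_Z : ∀ k l : Fin n, k ≠ l → ∃ L : ℂ,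
      Tendsto (fun N => (eps N : ℂ) ^ 2 * Zq (delta N) (z N) k l) atTop (nhds L))
    (p q r : Fin n) (hpq : p ≠ q) (hpr : p ≠ r) (hqr : q ≠ r)
    (Hp : ¬ Tendsto (fun N => (eps N : ℂ) ^ 2 * z N p) atTop (nhds 0))
    (HZpq : ¬ Tendsto (fun N => (eps N : ℂ) ^ 2 * Zq (delta N) (z N) p q) atTop (nhds 0))
    (HZpr : ¬ Tendsto (fun N => (eps N : ℂ) ^ 2 * Zq (delta N) (z N) p r) atTop (nhds 0))
    (Hq : Tendsto (fun N => (eps N : ℂ) ^ 2 * z N q) atTop (nhds 0))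
    (Hr : Tendsto (fun N => (eps N : ℂ) ^ 2 * z N r) atTop (nhds 0)) : False := by
  obtain ⟨c, hcT⟩ := conv_z p
  have hc : c ≠ 0 := fun h => Hp (h ▸ hcT)
  obtain ⟨Z1, hZ1T⟩ := conv_Z p q hpq
  have hZ1 : Z1 ≠ 0 := fun h => HZpq (h ▸ hZ1T)
  obtain ⟨Z2, hZ2T⟩ := conv_Z p r hpr
  have hZ2 : Z2 ≠ 0 := fun h => HZpr (h ▸ hZ2T)
  exact key_s10 eps heps (fun N => z N p) (fun N => z N q) (fun N => z N r)
    (fun N => w N p) (fun N => w N q) (fun N => w N r)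
    (fun N => delta N p q) (fun N => delta N p r) (fun N => delta N q r)
    (fun N => hnorm N p q hpq) (fun N => hnorm N p r hpr) (fun N => hnorm N q r hqr)
    (fun N => hbound N q r hqr) hc hZ1 hZ2 hcT Hq Hr hZ1T hZ2T

private lemma bound_of_max {n : ℕ} {m : Fin n → ℂ} (S : SingularSeq n m) :
    ∀ N, ∀ k l : Fin n, k ≠ l →
      ‖(S.eps N : ℂ) ^ 2 * Zq (S.delta N) (S.z N) k l‖ ≤ 1 := by
  intro N k l hkl
  have hmem : ‖Zq (S.delta N) (S.z N) k l‖ ∈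
      ({x : ℝ | ∃ k, x = ‖S.z N k‖} ∪
        {x : ℝ | ∃ k l, k ≠ l ∧ x = ‖Zq (S.delta N) (S.z N) k l‖}) :=
    Or.inr ⟨k, l, hkl, rfl⟩
  have hle := (S.maxZ N).2 hmem
  have he := S.eps_pos N
  have hrw : S.eps N ^ (-2 : ℤ) = (S.eps N ^ 2)⁻¹ := by
    rw [zpow_neg, show ((2:ℤ)) = ((2:ℕ):ℤ) from rfl, zpow_natCast]
  rw [norm_mul, norm_pow, Complex.norm_real, Real.norm_of_nonneg he.le]
  rw [hrw] at hle
  calc S.eps N ^ 2 * ‖Zq (S.delta N) (S.z N) k l‖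
      ≤ S.eps N ^ 2 * (S.eps N ^ 2)⁻¹ := by
        exact mul_le_mul_of_nonneg_left hle (by positivity)
    _ = 1 := mul_inv_cancel₀ (by positivity)

private lemma bound_of_maxW {n : ℕ} {m : Fin n → ℂ} (S : SingularSeq n m) :
    ∀ N, ∀ k l : Fin n, k ≠ l →
      ‖(S.eps N : ℂ) ^ 2 * Zq (S.delta N) (S.w N) k l‖ ≤ 1 := by
  intro N k l hkl
  have hmem : ‖Zq (S.delta N) (S.w N) k l‖ ∈
      ({x : ℝ | ∃ k, x = ‖S.w N k‖} ∪
        {x : ℝ | ∃ k l, k ≠ l ∧ x = ‖Zq (S.delta N) (S.w N) k l‖}) :=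
    Or.inr ⟨k, l, hkl, rfl⟩
  have hle := (S.maxW N).2 hmem
  have he := S.eps_pos N
  have hrw : S.eps N ^ (-2 : ℤ) = (S.eps N ^ 2)⁻¹ := by
    rw [zpow_neg, show ((2:ℤ)) = ((2:ℕ):ℤ) from rfl, zpow_natCast]
  rw [norm_mul, norm_pow, Complex.norm_real, Real.norm_of_nonneg he.le]
  rw [hrw] at hle
  calc S.eps N ^ 2 * ‖Zq (S.delta N) (S.w N) k l‖
      ≤ S.eps N ^ 2 * (S.eps N ^ 2)⁻¹ := by
        exact mul_le_mul_of_nonneg_left hle (by positivity)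
    _ = 1 := mul_inv_cancel₀ (by positivity)

theorem second_rule_of_triangles (n : ℕ) (hn : 3 ≤ n) (m : Fin n → ℂ)
    (hm : ∀ I : Finset (Fin n), I.Nonempty → ∑ k ∈ I, m k ≠ 0)
    (S : SingularSeq n m) (A B : Matrix (Fin n) (Fin n) ℕ)
    (hAB : IsZWMatrices S A B) :
    ∀ i j k : Fin n, i < j → j < k →
      (A i i + A i j + A i k + A j j + A j k + A k k) *
          max (A i i + A i j + A i k)
            (max (A j i + A j j + A j k) (A k i + A k j + A k k)) ≠ 9 ∧
      (B i i + B i j + B i k + B j j + B j k + B k k) *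
          max (B i i + B i j + B i k)
            (max (B j i + B j j + B j k) (B k i + B k j + B k k)) ≠ 9 := by
  intro i j k hij hjk
  have hij' : i ≠ j := ne_of_lt hij
  have hjk' : j ≠ k := ne_of_lt hjk
  have hik' : i ≠ k := ne_of_lt (hij.trans hjk)
  have hnormw : ∀ N, ∀ a b : Fin n, a ≠ b →
      S.delta N a b ^ 2 * (S.w N b - S.w N a) * (S.z N b - S.z N a) = 1 := by
    intro N a b hab
    rw [← S.normalize N a b hab]; ring
  constructor
  · intro h
    have e1 := hAB.zeroOne_A i i
    have e2 := hAB.zeroOne_A i j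
    have e3 := hAB.zeroOne_A i k
    have e4 := hAB.zeroOne_A j j
    have e5 := hAB.zeroOne_A j k
    have e6 := hAB.zeroOne_A k k
    have s1 : A j i = A i j := hAB.symm_A j i
    have s2 : A k i = A i k := hAB.symm_A k i
    have s3 : A k j = A j k := hAB.symm_A k j
    have hcases :
        (A i i = 1 ∧ A i j = 1 ∧ A i k = 1 ∧ A j j = 0 ∧ A k k = 0) ∨
        (A j j = 1 ∧ A i j = 1 ∧ A j k = 1 ∧ A i i = 0 ∧ A k k = 0) ∨
        (A k k = 1 ∧ A i k = 1 ∧ A j k = 1 ∧ A i i = 0 ∧ A j j = 0) := by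
      rw [s1, s2, s3] at h
      rcases e1 with e1 | e1 <;> rcases e2 with e2 | e2 <;> rcases e3 with e3 | e3 <;>
        rcases e4 with e4 | e4 <;> rcases e5 with e5 | e5 <;> rcases e6 with e6 | e6 <;>
        simp only [e1, e2, e3, e4, e5, e6] at h <;> omega
    have tendA : ∀ a : Fin n, A a a = 0 →
        Tendsto (fun N => (S.eps N : ℂ) ^ 2 * S.z N a) atTop (nhds 0) := by
      intro a ha
      by_contra hT
      have := (hAB.diag_A a).mpr hT
      omega
    have notA : ∀ a : Fin n, A a a = 1 →
        ¬ Tendsto (fun N => (S.eps N : ℂ) ^ 2 * S.z N a) atTop (nhds 0) :=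
      fun a ha => (hAB.diag_A a).mp ha
    have notAZ : ∀ a b : Fin n, a ≠ b → A a b = 1 →
        ¬ Tendsto (fun N => (S.eps N : ℂ) ^ 2 * Zq (S.delta N) (S.z N) a b) atTop (nhds 0) :=
      fun a b hab h1 => (hAB.off_A a b hab).mp h1
    rcases hcases with ⟨q1, q2, q3, q4, q5⟩ | ⟨q1, q2, q3, q4, q5⟩ | ⟨q1, q2, q3, q4, q5⟩
    · exact noFullRow S.eps S.eps_pos S.z S.w S.delta S.normalize (bound_of_max S)
        S.conv_z S.conv_Z i j k hij' hik' hjk'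
        (notA i q1) (notAZ i j hij' q2) (notAZ i k hik' q3) (tendA j q4) (tendA k q5)
    · exact noFullRow S.eps S.eps_pos S.z S.w S.delta S.normalize (bound_of_max S)
        S.conv_z S.conv_Z j i k hij'.symm hjk' hik'
        (notA j q1) (notAZ j i hij'.symm (s1 ▸ q2)) (notAZ j k hjk' q3)
        (tendA i q4) (tendA k q5)
    · exact noFullRow S.eps S.eps_pos S.z S.w S.delta S.normalize (bound_of_max S)
        S.conv_z S.conv_Z k i j hik'.symm hjk'.symm hij'
        (notA k q1) (notAZ k i hik'.symm (s2 ▸ q2)) (notAZ k j hjk'.symm (s3 ▸ q3))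
        (tendA i q4) (tendA j q5)
  · intro h
    have e1 := hAB.zeroOne_B i i
    have e2 := hAB.zeroOne_B i j
    have e3 := hAB.zeroOne_B i k
    have e4 := hAB.zeroOne_B j j
    have e5 := hAB.zeroOne_B j k
    have e6 := hAB.zeroOne_B k k
    have s1 : B j i = B i j := hAB.symm_B j i
    have s2 : B k i = B i k := hAB.symm_B k i
    have s3 : B k j = B j k := hAB.symm_B k j
    have hcases :
        (B i i = 1 ∧ B i j = 1 ∧ B i k = 1 ∧ B j j = 0 ∧ B k k = 0) ∨
        (B j j = 1 ∧ B i j = 1 ∧ B j k = 1 ∧ B i i = 0 ∧ B k k = 0) ∨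
        (B k k = 1 ∧ B i k = 1 ∧ B j k = 1 ∧ B i i = 0 ∧ B j j = 0) := by
      rw [s1, s2, s3] at h
      rcases e1 with e1 | e1 <;> rcases e2 with e2 | e2 <;> rcases e3 with e3 | e3 <;>
        rcases e4 with e4 | e4 <;> rcases e5 with e5 | e5 <;> rcases e6 with e6 | e6 <;>
        simp only [e1, e2, e3, e4, e5, e6] at h <;> omega
    have tendB : ∀ a : Fin n, B a a = 0 →
        Tendsto (fun N => (S.eps N : ℂ) ^ 2 * S.w N a) atTop (nhds 0) := by
      intro a ha
      by_contra hT
      have := (hAB.diag_B a).mpr hT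
      omega
    have notB : ∀ a : Fin n, B a a = 1 →
        ¬ Tendsto (fun N => (S.eps N : ℂ) ^ 2 * S.w N a) atTop (nhds 0) :=
      fun a ha => (hAB.diag_B a).mp ha
    have notBZ : ∀ a b : Fin n, a ≠ b → B a b = 1 →
        ¬ Tendsto (fun N => (S.eps N : ℂ) ^ 2 * Zq (S.delta N) (S.w N) a b) atTop (nhds 0) :=
      fun a b hab h1 => (hAB.off_B a b hab).mp h1
    rcases hcases with ⟨q1, q2, q3, q4, q5⟩ | ⟨q1, q2, q3, q4, q5⟩ | ⟨q1, q2, q3, q4, q5⟩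
    · exact noFullRow S.eps S.eps_pos S.w S.z S.delta hnormw (bound_of_maxW S)
        S.conv_w S.conv_W i j k hij' hik' hjk'
        (notB i q1) (notBZ i j hij' q2) (notBZ i k hik' q3) (tendB j q4) (tendB k q5)
    · exact noFullRow S.eps S.eps_pos S.w S.z S.delta hnormw (bound_of_maxW S)
        S.conv_w S.conv_W j i k hij'.symm hjk' hik'
        (notB j q1) (notBZ j i hij'.symm (s1 ▸ q2)) (notBZ j k hjk' q3)
        (tendB i q4) (tendB k q5)
    · exact noFullRow S.eps S.eps_pos S.w S.z S.delta hnormw (bound_of_maxW S)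
        S.conv_w S.conv_W k i j hik'.symm hjk'.symm hij'
        (notB k q1) (notBZ k i hik'.symm (s2 ▸ q2)) (notBZ k j hjk'.symm (s3 ▸ q3))
        (tendB i q4) (tendB j q5)
end

section
/- (Third Rule of Triangles) Let n ≥ 3 and let A and B be the z-matrix and w-matrix of a singular sequence and C = A + B. Then for all 1 ≤ i < j < k ≤ n, the sum c_{ij} + c_{jk} + c_{ik} is neither 4 nor 5. -/
open Filter Finset



open Filter Finset

namespace ThirdRuleAux

lemma le_max_of_pow4 {x M : ℝ} (h : x ^ 4 ≤ M) (hx : 0 ≤ x) : x ≤ max 1 M := by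
  rcases le_total x 1 with h1 | h1
  · exact le_max_of_le_left h1
  · exact le_max_of_le_right ((le_self_pow₀ h1 (by norm_num)).trans h)

lemma tendsto_of_pow4 {f : ℕ → ℝ} (hf : ∀ N, 0 ≤ f N)
    (h : Tendsto (fun N => f N ^ 4) atTop (nhds 0)) : Tendsto f atTop (nhds 0) := by
  rw [Metric.tendsto_atTop] at h ⊢
  intro ε hε
  obtain ⟨N₀, hN₀⟩ := h (ε ^ 4) (by positivity)
  refine ⟨N₀, fun n hn => ?_⟩
  have := hN₀ n hn
  rw [Real.dist_eq, sub_zero, abs_of_nonneg (by positivity)] at this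
  rw [Real.dist_eq, sub_zero, abs_of_nonneg (hf n)]
  exact lt_of_pow_lt_pow_left₀ 4 hε.le this

lemma ev_lb {f : ℕ → ℂ} {l : ℂ} (hne : l ≠ 0) (ht : Tendsto f atTop (nhds l)) :
    ∀ᶠ N in atTop, ‖l‖ / 2 < ‖f N‖ :=
  ht.norm.eventually (eventually_gt_nhds (by simpa using half_lt_self (norm_pos_iff.mpr hne)))

/-- Abstract data of one edge of a triangle in a singular sequence:
`u = ε²Z`, `v = ε²W`, `p = z_kl/ε`, `q = w_kl/ε`. -/
structure Edge : Type where
  u : ℕ → ℂ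
  v : ℕ → ℂ
  p : ℕ → ℂ
  q : ℕ → ℂ
  hu : ∀ N, p N ^ 4 * v N ^ 3 = u N
  hv : ∀ N, q N ^ 4 * u N ^ 3 = v N
  huv : ∀ N, (p N * q N) ^ 2 * (u N * v N) = 1
  bu : ∀ N, ‖u N‖ ≤ 1
  bv : ∀ N, ‖v N‖ ≤ 1
  zl : ℂ
  wl : ℂ
  hzl : Tendsto u atTop (nhds zl)
  hwl : Tendsto v atTop (nhds wl)

namespace Edge

lemma norm_hu (e : Edge) (N : ℕ) : ‖e.p N‖ ^ 4 * ‖e.v N‖ ^ 3 = ‖e.u N‖ := by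
  rw [← norm_pow, ← norm_pow, ← norm_mul, e.hu]

lemma norm_hv (e : Edge) (N : ℕ) : ‖e.q N‖ ^ 4 * ‖e.u N‖ ^ 3 = ‖e.v N‖ := by
  rw [← norm_pow, ← norm_pow, ← norm_mul, e.hv]

/-- If `ω ≠ 0` then `p` is eventually bounded. -/
lemma p_bdd (e : Edge) (h : e.wl ≠ 0) : ∃ C : ℝ, ∀ᶠ N in atTop, ‖e.p N‖ ≤ C := by
  set c : ℝ := ‖e.wl‖ / 2 with hc
  have hcpos : 0 < c := by
    have := norm_pos_iff.mpr h; rw [hc]; linarith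
  refine ⟨max 1 (1 / c ^ 3), ?_⟩
  filter_upwards [ev_lb h e.hwl] with N hN
  refine le_max_of_pow4 ?_ (norm_nonneg _)
  rw [le_div_iff₀ (by positivity)]
  calc ‖e.p N‖ ^ 4 * c ^ 3 ≤ ‖e.p N‖ ^ 4 * ‖e.v N‖ ^ 3 := by gcongr
    _ = ‖e.u N‖ := e.norm_hu N
    _ ≤ 1 := e.bu N

lemma q_bdd (e : Edge) (h : e.zl ≠ 0) : ∃ C : ℝ, ∀ᶠ N in atTop, ‖e.q N‖ ≤ C := by
  set c : ℝ := ‖e.zl‖ / 2 with hc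
  have hcpos : 0 < c := by
    have := norm_pos_iff.mpr h; rw [hc]; linarith
  refine ⟨max 1 (1 / c ^ 3), ?_⟩
  filter_upwards [ev_lb h e.hzl] with N hN
  refine le_max_of_pow4 ?_ (norm_nonneg _)
  rw [le_div_iff₀ (by positivity)]
  calc ‖e.q N‖ ^ 4 * c ^ 3 ≤ ‖e.q N‖ ^ 4 * ‖e.u N‖ ^ 3 := by gcongr
    _ = ‖e.v N‖ := e.norm_hv N
    _ ≤ 1 := e.bv N

/-- If `ζ ≠ 0` and `ω = 0` then `q → 0`. -/
lemma q_zero (e : Edge) (hz : e.zl ≠ 0) (hw : e.wl = 0) :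
    Tendsto e.q atTop (nhds 0) := by
  set c : ℝ := ‖e.zl‖ / 2 with hc
  have hcpos : 0 < c := by
    have := norm_pos_iff.mpr hz; rw [hc]; linarith
  rw [tendsto_zero_iff_norm_tendsto_zero]
  apply tendsto_of_pow4 (fun N => norm_nonneg _)
  have hvn : Tendsto (fun N => ‖e.v N‖) atTop (nhds 0) := by
    have := e.hwl.norm; rwa [hw, norm_zero] at this
  have hv0 : Tendsto (fun N => ‖e.v N‖ / c ^ 3) atTop (nhds 0) := by
    have := hvn.div_const (c ^ 3); rwa [zero_div] at this
  apply squeeze_zero' (Eventually.of_forall fun N => by positivity) ?_ hv0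
  filter_upwards [ev_lb hz e.hzl] with N hN
  have key : ‖e.q N‖ ^ 4 * c ^ 3 ≤ ‖e.v N‖ := by
    rw [← e.norm_hv N]; gcongr
  calc ‖e.q N‖ ^ 4 = ‖e.q N‖ ^ 4 * c ^ 3 / c ^ 3 := by field_simp
    _ ≤ ‖e.v N‖ / c ^ 3 := by gcongr

/-- If `ω ≠ 0` and `ζ = 0` then `p → 0`. -/
lemma p_zero (e : Edge) (hw : e.wl ≠ 0) (hz : e.zl = 0) :
    Tendsto e.p atTop (nhds 0) := by
  set c : ℝ := ‖e.wl‖ / 2 with hc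
  have hcpos : 0 < c := by
    have := norm_pos_iff.mpr hw; rw [hc]; linarith
  rw [tendsto_zero_iff_norm_tendsto_zero]
  apply tendsto_of_pow4 (fun N => norm_nonneg _)
  have hun : Tendsto (fun N => ‖e.u N‖) atTop (nhds 0) := by
    have := e.hzl.norm; rwa [hz, norm_zero] at this
  have hu0 : Tendsto (fun N => ‖e.u N‖ / c ^ 3) atTop (nhds 0) := by
    have := hun.div_const (c ^ 3); rwa [zero_div] at this
  apply squeeze_zero' (Eventually.of_forall fun N => by positivity) ?_ hu0
  filter_upwards [ev_lb hw e.hwl] with N hN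
  have key : ‖e.p N‖ ^ 4 * c ^ 3 ≤ ‖e.u N‖ := by
    rw [← e.norm_hu N]; gcongr
  calc ‖e.p N‖ ^ 4 = ‖e.p N‖ ^ 4 * c ^ 3 / c ^ 3 := by field_simp
    _ ≤ ‖e.u N‖ / c ^ 3 := by gcongr

/-- If `ω = 0` and `p` is eventually bounded, then `ζ = 0`. -/
lemma zl_eq_zero (e : Edge) (hw : e.wl = 0) (hb : ∃ C : ℝ, ∀ᶠ N in atTop, ‖e.p N‖ ≤ C) :
    e.zl = 0 := by
  obtain ⟨C, hC⟩ := hb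
  have hu0 : Tendsto e.u atTop (nhds 0) := by
    rw [tendsto_zero_iff_norm_tendsto_zero]
    have hvn : Tendsto (fun N => ‖e.v N‖) atTop (nhds 0) := by
      have := e.hwl.norm; rwa [hw, norm_zero] at this
    have hv3 : Tendsto (fun N => C ^ 4 * ‖e.v N‖ ^ 3) atTop (nhds 0) := by
      have := (hvn.pow 3).const_mul (C ^ 4)
      simpa using this
    apply squeeze_zero' (Eventually.of_forall fun N => norm_nonneg _) ?_ hv3
    filter_upwards [hC] with N hN
    have h0C : (0:ℝ) ≤ C := le_trans (norm_nonneg _) hN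
    rw [← e.norm_hu N]
    gcongr
  exact tendsto_nhds_unique e.hzl hu0

lemma wl_eq_zero (e : Edge) (hz : e.zl = 0) (hb : ∃ C : ℝ, ∀ᶠ N in atTop, ‖e.q N‖ ≤ C) :
    e.wl = 0 := by
  obtain ⟨C, hC⟩ := hb
  have hv0 : Tendsto e.v atTop (nhds 0) := by
    rw [tendsto_zero_iff_norm_tendsto_zero]
    have hun : Tendsto (fun N => ‖e.u N‖) atTop (nhds 0) := by
      have := e.hzl.norm; rwa [hz, norm_zero] at this
    have hu3 : Tendsto (fun N => C ^ 4 * ‖e.u N‖ ^ 3) atTop (nhds 0) := by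
      have := (hun.pow 3).const_mul (C ^ 4)
      simpa using this
    apply squeeze_zero' (Eventually.of_forall fun N => norm_nonneg _) ?_ hu3
    filter_upwards [hC] with N hN
    have h0C : (0:ℝ) ≤ C := le_trans (norm_nonneg _) hN
    rw [← e.norm_hv N]
    gcongr
  exact tendsto_nhds_unique e.hwl hv0

end Edge

lemma Lz (e1 e2 e3 : Edge) (hp : ∀ N, e1.p N + e2.p N + e3.p N = 0)
    (h1 : e1.wl ≠ 0) (h2 : e2.wl ≠ 0) (h3 : e3.wl = 0) : e3.zl = 0 := by
  obtain ⟨C1, hC1⟩ := e1.p_bdd h1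
  obtain ⟨C2, hC2⟩ := e2.p_bdd h2
  refine e3.zl_eq_zero h3 ⟨C1 + C2, ?_⟩
  filter_upwards [hC1, hC2] with N hN1 hN2
  have h3p : e3.p N = -(e1.p N + e2.p N) := by linear_combination hp N
  rw [h3p, norm_neg]
  exact (norm_add_le _ _).trans (add_le_add hN1 hN2)

lemma Lw (e1 e2 e3 : Edge) (hq : ∀ N, e1.q N + e2.q N + e3.q N = 0)
    (h1 : e1.zl ≠ 0) (h2 : e2.zl ≠ 0) (h3 : e3.zl = 0) : e3.wl = 0 := by
  obtain ⟨C1, hC1⟩ := e1.q_bdd h1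
  obtain ⟨C2, hC2⟩ := e2.q_bdd h2
  refine e3.wl_eq_zero h3 ⟨C1 + C2, ?_⟩
  filter_upwards [hC1, hC2] with N hN1 hN2
  have h3q : e3.q N = -(e1.q N + e2.q N) := by linear_combination hq N
  rw [h3q, norm_neg]
  exact (norm_add_le _ _).trans (add_le_add hN1 hN2)

lemma Lc (e1 e2 e3 : Edge) (hq : ∀ N, e1.q N + e2.q N + e3.q N = 0)
    (hz2 : e2.zl ≠ 0) (hw2 : e2.wl = 0) (hz3 : e3.zl ≠ 0) (hw3 : e3.wl = 0) :
    e1.wl = 0 := by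
  have hq2 := e2.q_zero hz2 hw2
  have hq3 := e3.q_zero hz3 hw3
  have hq1 : Tendsto e1.q atTop (nhds 0) := by
    have he : e1.q = fun N => -(e2.q N + e3.q N) := funext fun N => by linear_combination hq N
    rw [he]
    simpa using (hq2.add hq3).neg
  have hv0 : Tendsto e1.v atTop (nhds 0) := by
    rw [tendsto_zero_iff_norm_tendsto_zero]
    have h4 : Tendsto (fun N => ‖e1.q N‖ ^ 4) atTop (nhds 0) := by
      have := (tendsto_zero_iff_norm_tendsto_zero.mp hq1).pow 4
      simpa using this
    apply squeeze_zero' (Eventually.of_forall fun N => norm_nonneg _)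
      (Eventually.of_forall fun N => ?_) h4
    rw [← e1.norm_hv N]
    calc ‖e1.q N‖ ^ 4 * ‖e1.u N‖ ^ 3 ≤ ‖e1.q N‖ ^ 4 * 1 ^ 3 := by
          gcongr
          exact e1.bu N
      _ = ‖e1.q N‖ ^ 4 := by ring
  exact tendsto_nhds_unique e1.hwl hv0

lemma Lcw (e1 e2 e3 : Edge) (hp : ∀ N, e1.p N + e2.p N + e3.p N = 0)
    (hw2 : e2.wl ≠ 0) (hz2 : e2.zl = 0) (hw3 : e3.wl ≠ 0) (hz3 : e3.zl = 0) :
    e1.zl = 0 := by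
  have hp2 := e2.p_zero hw2 hz2
  have hp3 := e3.p_zero hw3 hz3
  have hp1 : Tendsto e1.p atTop (nhds 0) := by
    have he : e1.p = fun N => -(e2.p N + e3.p N) := funext fun N => by linear_combination hp N
    rw [he]
    simpa using (hp2.add hp3).neg
  have hu0 : Tendsto e1.u atTop (nhds 0) := by
    rw [tendsto_zero_iff_norm_tendsto_zero]
    have h4 : Tendsto (fun N => ‖e1.p N‖ ^ 4) atTop (nhds 0) := by
      have := (tendsto_zero_iff_norm_tendsto_zero.mp hp1).pow 4
      simpa using this
    apply squeeze_zero' (Eventually.of_forall fun N => norm_nonneg _)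
      (Eventually.of_forall fun N => ?_) h4
    rw [← e1.norm_hu N]
    calc ‖e1.p N‖ ^ 4 * ‖e1.v N‖ ^ 3 ≤ ‖e1.p N‖ ^ 4 * 1 ^ 3 := by
          gcongr
          exact e1.bv N
      _ = ‖e1.p N‖ ^ 4 := by ring
  exact tendsto_nhds_unique e1.hzl hu0

lemma Lb (e1 e2 e3 : Edge) (hp : ∀ N, e1.p N + e2.p N + e3.p N = 0)
    (hq : ∀ N, e1.q N + e2.q N + e3.q N = 0)
    (hz1 : e1.zl ≠ 0) (hw1 : e1.wl ≠ 0) (hz2 : e2.zl ≠ 0) (hw2 : e2.wl ≠ 0)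
    (hz3 : e3.zl = 0) (hw3 : e3.wl = 0) : False := by
  obtain ⟨C1, hC1⟩ := e1.p_bdd hw1
  obtain ⟨C2, hC2⟩ := e2.p_bdd hw2
  obtain ⟨D1, hD1⟩ := e1.q_bdd hz1
  obtain ⟨D2, hD2⟩ := e2.q_bdd hz2
  have hp3 : ∀ᶠ N in atTop, ‖e3.p N‖ ≤ C1 + C2 := by
    filter_upwards [hC1, hC2] with N h1 h2
    have he : e3.p N = -(e1.p N + e2.p N) := by linear_combination hp N
    rw [he, norm_neg]
    exact (norm_add_le _ _).trans (add_le_add h1 h2)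
  have hq3 : ∀ᶠ N in atTop, ‖e3.q N‖ ≤ D1 + D2 := by
    filter_upwards [hD1, hD2] with N h1 h2
    have he : e3.q N = -(e1.q N + e2.q N) := by linear_combination hq N
    rw [he, norm_neg]
    exact (norm_add_le _ _).trans (add_le_add h1 h2)
  set C := C1 + C2 with hCdef
  set D := D1 + D2 with hDdef
  have h0 : Tendsto (fun N => (e3.p N * e3.q N) ^ 2 * (e3.u N * e3.v N)) atTop (nhds 0) := by
    rw [tendsto_zero_iff_norm_tendsto_zero]
    have hun : Tendsto (fun N => ‖e3.u N‖) atTop (nhds 0) := by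
      have := e3.hzl.norm; rwa [hz3, norm_zero] at this
    have hvn : Tendsto (fun N => ‖e3.v N‖) atTop (nhds 0) := by
      have := e3.hwl.norm; rwa [hw3, norm_zero] at this
    have huv0 : Tendsto (fun N => (C * D) ^ 2 * (‖e3.u N‖ * ‖e3.v N‖)) atTop (nhds 0) := by
      have := (hun.mul hvn).const_mul ((C * D) ^ 2)
      simpa using this
    apply squeeze_zero' (Eventually.of_forall fun N => norm_nonneg _) ?_ huv0
    filter_upwards [hp3, hq3] with N h1 h2
    have h0C : (0:ℝ) ≤ C := le_trans (norm_nonneg _) h1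
    have h0D : (0:ℝ) ≤ D := le_trans (norm_nonneg _) h2
    calc ‖(e3.p N * e3.q N) ^ 2 * (e3.u N * e3.v N)‖
        = (‖e3.p N‖ * ‖e3.q N‖) ^ 2 * (‖e3.u N‖ * ‖e3.v N‖) := by
          simp [norm_mul, norm_pow]
      _ ≤ (C * D) ^ 2 * (‖e3.u N‖ * ‖e3.v N‖) := by
          gcongr
  have h1 : Tendsto (fun _ : ℕ => (1:ℂ)) atTop (nhds 0) := by
    have he : (fun N => (e3.p N * e3.q N) ^ 2 * (e3.u N * e3.v N)) = fun _ : ℕ => (1:ℂ) :=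
      funext fun N => e3.huv N
    rwa [he] at h0
  exact one_ne_zero (tendsto_nhds_unique tendsto_const_nhds h1)

end ThirdRuleAux

namespace ThirdRuleAux

/-- The edge data associated to a pair `i ≠ j` of a singular sequence. -/
noncomputable def mkEdge {n : ℕ} {m : Fin n → ℂ} (S : SingularSeq n m) (i j : Fin n)
    (hij : i ≠ j) : Edge where
  u := fun N => (S.eps N : ℂ) ^ 2 * Zq (S.delta N) (S.z N) i j
  v := fun N => (S.eps N : ℂ) ^ 2 * Zq (S.delta N) (S.w N) i j
  p := fun N => (S.z N i - S.z N j) / (S.eps N : ℂ)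
  q := fun N => (S.w N i - S.w N j) / (S.eps N : ℂ)
  hu := by
    intro N
    have h := S.normalize N i j hij
    have hε : (S.eps N : ℂ) ≠ 0 := by
      exact_mod_cast (S.eps_pos N).ne'
    simp only [Zq]
    rw [div_pow, div_mul_eq_mul_div, div_eq_iff (pow_ne_zero 4 hε)]
    linear_combination ((S.eps N : ℂ) ^ 6 * S.delta N i j ^ 3 * (S.z N i - S.z N j) *
      (S.delta N i j ^ 4 * (S.z N i - S.z N j) ^ 2 * (S.w N i - S.w N j) ^ 2 +
        S.delta N i j ^ 2 * (S.z N i - S.z N j) * (S.w N i - S.w N j) + 1)) * h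
  hv := by
    intro N
    have h := S.normalize N i j hij
    have hε : (S.eps N : ℂ) ≠ 0 := by
      exact_mod_cast (S.eps_pos N).ne'
    simp only [Zq]
    rw [div_pow, div_mul_eq_mul_div, div_eq_iff (pow_ne_zero 4 hε)]
    linear_combination ((S.eps N : ℂ) ^ 6 * S.delta N i j ^ 3 * (S.w N i - S.w N j) *
      (S.delta N i j ^ 4 * (S.z N i - S.z N j) ^ 2 * (S.w N i - S.w N j) ^ 2 +
        S.delta N i j ^ 2 * (S.z N i - S.z N j) * (S.w N i - S.w N j) + 1)) * h
  huv := by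
    intro N
    have h := S.normalize N i j hij
    have hε : (S.eps N : ℂ) ≠ 0 := by
      exact_mod_cast (S.eps_pos N).ne'
    simp only [Zq]
    rw [div_mul_div_comm, div_pow, div_mul_eq_mul_div,
      div_eq_iff (pow_ne_zero 2 (mul_ne_zero hε hε))]
    linear_combination ((S.eps N : ℂ) ^ 4 *
      (S.delta N i j ^ 4 * (S.z N i - S.z N j) ^ 2 * (S.w N i - S.w N j) ^ 2 +
        S.delta N i j ^ 2 * (S.z N i - S.z N j) * (S.w N i - S.w N j) + 1)) * h
  bu := by
    intro N
    have hub := (S.maxZ N).2 (Set.mem_union_right _ ⟨i, j, hij, rfl⟩)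
    have hε := S.eps_pos N
    have h2 : (S.eps N) ^ (-2 : ℤ) = (S.eps N ^ 2)⁻¹ := by
      rw [zpow_neg, show ((2:ℤ)) = ((2:ℕ):ℤ) by norm_num, zpow_natCast]
    calc ‖(S.eps N : ℂ) ^ 2 * Zq (S.delta N) (S.z N) i j‖
        = S.eps N ^ 2 * ‖Zq (S.delta N) (S.z N) i j‖ := by
          rw [norm_mul, norm_pow, Complex.norm_real, Real.norm_eq_abs, abs_of_pos hε]
      _ ≤ S.eps N ^ 2 * (S.eps N ^ 2)⁻¹ := by
          gcongr
          rw [← h2]; exact hub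
      _ = 1 := mul_inv_cancel₀ (by positivity)
  bv := by
    intro N
    have hub := (S.maxW N).2 (Set.mem_union_right _ ⟨i, j, hij, rfl⟩)
    have hε := S.eps_pos N
    have h2 : (S.eps N) ^ (-2 : ℤ) = (S.eps N ^ 2)⁻¹ := by
      rw [zpow_neg, show ((2:ℤ)) = ((2:ℕ):ℤ) by norm_num, zpow_natCast]
    calc ‖(S.eps N : ℂ) ^ 2 * Zq (S.delta N) (S.w N) i j‖
        = S.eps N ^ 2 * ‖Zq (S.delta N) (S.w N) i j‖ := by
          rw [norm_mul, norm_pow, Complex.norm_real, Real.norm_eq_abs, abs_of_pos hε]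
      _ ≤ S.eps N ^ 2 * (S.eps N ^ 2)⁻¹ := by
          gcongr
          rw [← h2]; exact hub
      _ = 1 := mul_inv_cancel₀ (by positivity)
  zl := (S.conv_Z i j hij).choose
  wl := (S.conv_W i j hij).choose
  hzl := (S.conv_Z i j hij).choose_spec
  hwl := (S.conv_W i j hij).choose_spec

/-- The fully abstract triangle rule. -/
lemma triangle_main (e1 e2 e3 : Edge)
    (hp : ∀ N, e1.p N + e2.p N + e3.p N = 0)
    (hq : ∀ N, e1.q N + e2.q N + e3.q N = 0)
    (a1 b1 a2 b2 a3 b3 : ℕ)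
    (h1 : (a1 = 0 ∧ e1.zl = 0) ∨ (a1 = 1 ∧ e1.zl ≠ 0))
    (h2 : (b1 = 0 ∧ e1.wl = 0) ∨ (b1 = 1 ∧ e1.wl ≠ 0))
    (h3 : (a2 = 0 ∧ e2.zl = 0) ∨ (a2 = 1 ∧ e2.zl ≠ 0))
    (h4 : (b2 = 0 ∧ e2.wl = 0) ∨ (b2 = 1 ∧ e2.wl ≠ 0))
    (h5 : (a3 = 0 ∧ e3.zl = 0) ∨ (a3 = 1 ∧ e3.zl ≠ 0))
    (h6 : (b3 = 0 ∧ e3.wl = 0) ∨ (b3 = 1 ∧ e3.wl ≠ 0)) :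
    (a1 + b1) + (a2 + b2) + (a3 + b3) ≠ 4 ∧ (a1 + b1) + (a2 + b2) + (a3 + b3) ≠ 5 := by
  have hp132 : ∀ N, e1.p N + e3.p N + e2.p N = 0 := fun N => by linear_combination hp N
  have hp231 : ∀ N, e2.p N + e3.p N + e1.p N = 0 := fun N => by linear_combination hp N
  have hp213 : ∀ N, e2.p N + e1.p N + e3.p N = 0 := fun N => by linear_combination hp N
  have hp312 : ∀ N, e3.p N + e1.p N + e2.p N = 0 := fun N => by linear_combination hp N
  have hq132 : ∀ N, e1.q N + e3.q N + e2.q N = 0 := fun N => by linear_combination hq N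
  have hq231 : ∀ N, e2.q N + e3.q N + e1.q N = 0 := fun N => by linear_combination hq N
  have hq213 : ∀ N, e2.q N + e1.q N + e3.q N = 0 := fun N => by linear_combination hq N
  have hq312 : ∀ N, e3.q N + e1.q N + e2.q N = 0 := fun N => by linear_combination hq N
  refine ⟨fun hsum => ?_, fun hsum => ?_⟩ <;>
  · rcases h1 with ⟨ha1, hz1⟩ | ⟨ha1, hz1⟩ <;>
    rcases h2 with ⟨hb1, hw1⟩ | ⟨hb1, hw1⟩ <;>
    rcases h3 with ⟨ha2, hz2⟩ | ⟨ha2, hz2⟩ <;>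
    rcases h4 with ⟨hb2, hw2⟩ | ⟨hb2, hw2⟩ <;>
    rcases h5 with ⟨ha3, hz3⟩ | ⟨ha3, hz3⟩ <;>
    rcases h6 with ⟨hb3, hw3⟩ | ⟨hb3, hw3⟩ <;>
    first
    | omega
    | exact hz3 (Lz e1 e2 e3 hp hw1 hw2 hw3)
    | exact hz2 (Lz e1 e3 e2 hp132 hw1 hw3 hw2)
    | exact hz1 (Lz e2 e3 e1 hp231 hw2 hw3 hw1)
    | exact hw3 (Lw e1 e2 e3 hq hz1 hz2 hz3)
    | exact hw2 (Lw e1 e3 e2 hq132 hz1 hz3 hz2)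
    | exact hw1 (Lw e2 e3 e1 hq231 hz2 hz3 hz1)
    | exact hw1 (Lc e1 e2 e3 hq hz2 hw2 hz3 hw3)
    | exact hw2 (Lc e2 e1 e3 hq213 hz1 hw1 hz3 hw3)
    | exact hw3 (Lc e3 e1 e2 hq312 hz1 hw1 hz2 hw2)
    | exact hz1 (Lcw e1 e2 e3 hp hw2 hz2 hw3 hz3)
    | exact hz2 (Lcw e2 e1 e3 hp213 hw1 hz1 hw3 hz3)
    | exact hz3 (Lcw e3 e1 e2 hp312 hw1 hz1 hw2 hz2)
    | exact Lb e1 e2 e3 hp hq hz1 hw1 hz2 hw2 hz3 hw3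
    | exact Lb e1 e3 e2 hp132 hq132 hz1 hw1 hz3 hw3 hz2 hw2
    | exact Lb e2 e3 e1 hp231 hq231 hz2 hw2 hz3 hw3 hz1 hw1

end ThirdRuleAux

theorem third_rule_of_triangles (n : ℕ) (hn : 3 ≤ n) (m : Fin n → ℂ)
    (hm : ∀ I : Finset (Fin n), I.Nonempty → ∑ k ∈ I, m k ≠ 0)
    (S : SingularSeq n m) (A B : Matrix (Fin n) (Fin n) ℕ)
    (hAB : IsZWMatrices S A B) :
    ∀ i j k : Fin n, i < j → j < k →
      (A i j + B i j) + (A j k + B j k) + (A i k + B i k) ≠ 4 ∧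
      (A i j + B i j) + (A j k + B j k) + (A i k + B i k) ≠ 5 := by
  intro i j k hij' hjk'
  have hij : i ≠ j := ne_of_lt hij'
  have hjk : j ≠ k := ne_of_lt hjk'
  have hki : k ≠ i := (ne_of_lt (hij'.trans hjk')).symm
  have char_z : ∀ (a b : Fin n) (hab : a ≠ b),
      (A a b = 0 ∧ (ThirdRuleAux.mkEdge S a b hab).zl = 0) ∨
      (A a b = 1 ∧ (ThirdRuleAux.mkEdge S a b hab).zl ≠ 0) := by
    intro a b hab
    by_cases h : (ThirdRuleAux.mkEdge S a b hab).zl = 0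
    · refine Or.inl ⟨?_, h⟩
      rcases hAB.zeroOne_A a b with h0 | h1
      · exact h0
      · exact absurd (h ▸ (ThirdRuleAux.mkEdge S a b hab).hzl) ((hAB.off_A a b hab).mp h1)
    · exact Or.inr ⟨(hAB.off_A a b hab).mpr
        (fun ht => h (tendsto_nhds_unique (ThirdRuleAux.mkEdge S a b hab).hzl ht)), h⟩
  have char_w : ∀ (a b : Fin n) (hab : a ≠ b),
      (B a b = 0 ∧ (ThirdRuleAux.mkEdge S a b hab).wl = 0) ∨
      (B a b = 1 ∧ (ThirdRuleAux.mkEdge S a b hab).wl ≠ 0) := by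
    intro a b hab
    by_cases h : (ThirdRuleAux.mkEdge S a b hab).wl = 0
    · refine Or.inl ⟨?_, h⟩
      rcases hAB.zeroOne_B a b with h0 | h1
      · exact h0
      · exact absurd (h ▸ (ThirdRuleAux.mkEdge S a b hab).hwl) ((hAB.off_B a b hab).mp h1)
    · exact Or.inr ⟨(hAB.off_B a b hab).mpr
        (fun ht => h (tendsto_nhds_unique (ThirdRuleAux.mkEdge S a b hab).hwl ht)), h⟩
  have hp : ∀ N, (ThirdRuleAux.mkEdge S i j hij).p N + (ThirdRuleAux.mkEdge S j k hjk).p N +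
      (ThirdRuleAux.mkEdge S k i hki).p N = 0 := by
    intro N
    show (S.z N i - S.z N j) / (S.eps N : ℂ) + (S.z N j - S.z N k) / (S.eps N : ℂ) +
      (S.z N k - S.z N i) / (S.eps N : ℂ) = 0
    rw [← add_div, ← add_div,
      show S.z N i - S.z N j + (S.z N j - S.z N k) + (S.z N k - S.z N i) = 0 by ring, zero_div]
  have hq : ∀ N, (ThirdRuleAux.mkEdge S i j hij).q N + (ThirdRuleAux.mkEdge S j k hjk).q N +
      (ThirdRuleAux.mkEdge S k i hki).q N = 0 := by
    intro N
    show (S.w N i - S.w N j) / (S.eps N : ℂ) + (S.w N j - S.w N k) / (S.eps N : ℂ) +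
      (S.w N k - S.w N i) / (S.eps N : ℂ) = 0
    rw [← add_div, ← add_div,
      show S.w N i - S.w N j + (S.w N j - S.w N k) + (S.w N k - S.w N i) = 0 by ring, zero_div]
  have main := ThirdRuleAux.triangle_main (ThirdRuleAux.mkEdge S i j hij)
    (ThirdRuleAux.mkEdge S j k hjk) (ThirdRuleAux.mkEdge S k i hki) hp hq
    (A i j) (B i j) (A j k) (B j k) (A k i) (B k i)
    (char_z i j hij) (char_w i j hij) (char_z j k hjk) (char_w j k hjk)
    (char_z k i hki) (char_w k i hki)
  rw [hAB.symm_A i k, hAB.symm_B i k]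
  exact main
end

section
/- (Fourth Rule of Triangles) Let n ≥ 3 and let A and B be the z-matrix and w-matrix of a singular sequence and C = A + B. Then for all 1 ≤ i < j < k ≤ n, the quantity c_{ij} c_{jk} c_{ik} · max{ a_{ij} + a_{jk} + a_{ik}, b_{ij} + b_{jk} + b_{ik} } belongs to the set {0, 3, 24}. -/
open Filter Finset

namespace FourthRuleAux

lemma tendsto_of_pow_four {g : ℕ → ℝ} (hg : ∀ N, 0 ≤ g N)
    (h : Tendsto (fun N => g N ^ 4) atTop (nhds 0)) : Tendsto g atTop (nhds 0) := by
  have h2 : Tendsto (fun N => (g N ^ 4) ^ ((4:ℝ)⁻¹)) atTop (nhds ((0:ℝ) ^ ((4:ℝ)⁻¹))) :=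
    h.rpow_const (Or.inr (by norm_num))
  rw [Real.zero_rpow (by norm_num)] at h2
  have he : (fun N => (g N ^ 4) ^ ((4:ℝ)⁻¹)) = g := by
    funext N
    rw [← Real.rpow_natCast (g N) 4, ← Real.rpow_mul (hg N)]
    norm_num
  rwa [he] at h2

lemma contra_inf {f1 f2 f3 : ℕ → ℝ} (h : ∀ N, f1 N ≤ f2 N + f3 N)
    (h1 : Tendsto f1 atTop atTop)
    (h2 : ∃ C, ∀ᶠ N in atTop, f2 N ≤ C) (h3 : ∃ C, ∀ᶠ N in atTop, f3 N ≤ C) : False := by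
  obtain ⟨C2, h2⟩ := h2; obtain ⟨C3, h3⟩ := h3
  obtain ⟨N, hN1, hN2, hN3⟩ := ((h1.eventually_gt_atTop (C2 + C3)).and (h2.and h3)).exists
  have := h N; linarith

lemma contra_pos {f1 f2 f3 : ℕ → ℝ} {c : ℝ} (hc : 0 < c)
    (h : ∀ N, f1 N ≤ f2 N + f3 N) (h1 : ∀ᶠ N in atTop, c ≤ f1 N)
    (h2 : Tendsto f2 atTop (nhds 0)) (h3 : Tendsto f3 atTop (nhds 0)) : False := by
  have h23 : Tendsto (fun N => f2 N + f3 N) atTop (nhds 0) := by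
    simpa using h2.add h3
  obtain ⟨N, hN1, hN2⟩ := (h1.and (h23.eventually (eventually_lt_nhds hc))).exists
  have := h N; linarith

structure EdgeData where
  eps : ℕ → ℝ
  δ : ℕ → ℂ
  u : ℕ → ℂ
  v : ℕ → ℂ
  heps : ∀ N, 0 < eps N
  hnorm : ∀ N, δ N ^ 2 * u N * v N = 1
  hPle : ∀ N, ‖(eps N : ℂ) ^ 2 * (δ N ^ 3 * u N)‖ ≤ 1
  hQle : ∀ N, ‖(eps N : ℂ) ^ 2 * (δ N ^ 3 * v N)‖ ≤ 1

namespace EdgeData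

variable (e : EdgeData)

noncomputable def P : ℕ → ℂ := fun N => (e.eps N : ℂ) ^ 2 * (e.δ N ^ 3 * e.u N)
noncomputable def Q : ℕ → ℂ := fun N => (e.eps N : ℂ) ^ 2 * (e.δ N ^ 3 * e.v N)
noncomputable def d : ℕ → ℝ := fun N => e.eps N * ‖e.δ N‖
noncomputable def f : ℕ → ℝ := fun N => ‖e.u N‖ / e.eps N

def swap : EdgeData :=
  ⟨e.eps, e.δ, e.v, e.u, e.heps, fun N => by linear_combination e.hnorm N,
    e.hQle, e.hPle⟩

lemma swap_P : e.swap.P = e.Q := rfl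
lemma swap_Q : e.swap.Q = e.P := rfl

lemma δ_ne (N : ℕ) : e.δ N ≠ 0 := by
  intro h
  have := e.hnorm N
  rw [h] at this
  simp at this

lemma u_ne (N : ℕ) : e.u N ≠ 0 := by
  intro h
  have := e.hnorm N
  rw [h] at this
  simp at this

lemma v_ne (N : ℕ) : e.v N ≠ 0 := by
  intro h
  have := e.hnorm N
  rw [h] at this
  simp at this

lemma d_pos (N : ℕ) : 0 < e.d N :=
  mul_pos (e.heps N) (norm_pos_iff.mpr (e.δ_ne N))

lemma eps_ne (N : ℕ) : e.eps N ≠ 0 := ne_of_gt (e.heps N)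

lemma absP (N : ℕ) : ‖e.P N‖
    = e.eps N ^ 2 * (‖e.δ N‖ ^ 3 * ‖e.u N‖) := by
  simp [P, map_mul, map_pow, Complex.norm_real, abs_of_pos (e.heps N)]

lemma absQ (N : ℕ) : ‖e.Q N‖
    = e.eps N ^ 2 * (‖e.δ N‖ ^ 3 * ‖e.v N‖) := by
  simp [Q, map_mul, map_pow, Complex.norm_real, abs_of_pos (e.heps N)]

lemma Q_ne (N : ℕ) : e.Q N ≠ 0 := by
  simp only [Q]
  exact mul_ne_zero (pow_ne_zero _ (by exact_mod_cast e.eps_ne N))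
    (mul_ne_zero (pow_ne_zero _ (e.δ_ne N)) (e.v_ne N))

lemma hPQ (N : ℕ) : e.P N * e.Q N = ((e.eps N : ℂ) * e.δ N) ^ 4 := by
  simp only [P, Q]
  linear_combination ((e.eps N : ℂ)) ^ 4 * (e.δ N) ^ 4 * e.hnorm N

lemma abs_eps_delta (N : ℕ) : ‖(e.eps N : ℂ) * e.δ N‖ = e.d N := by
  simp [d, map_mul, Complex.norm_real, abs_of_pos (e.heps N)]

lemma absPQ (N : ℕ) : ‖e.P N‖ * ‖e.Q N‖ = e.d N ^ 4 := by
  rw [← norm_mul, e.hPQ N, norm_pow, e.abs_eps_delta N]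

lemma d_le_one (N : ℕ) : e.d N ≤ 1 := by
  have h1 := e.hPle N
  have h2 := e.hQle N
  have h3 := e.absPQ N
  have h4 : e.d N ^ 4 ≤ 1 := by
    rw [← h3]
    calc ‖e.P N‖ * ‖e.Q N‖ ≤ 1 * 1 :=
      mul_le_mul h1 h2 (norm_nonneg _) zero_le_one
    _ = 1 := by ring
  by_contra hgt
  push_neg at hgt
  have : (1:ℝ) < e.d N ^ 4 := one_lt_pow₀ hgt (by norm_num)
  linarith

lemma f_eq_P (N : ℕ) : e.f N = ‖e.P N‖ / e.d N ^ 3 := by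
  rw [absP]
  have h1 : e.eps N ≠ 0 := e.eps_ne N
  have h2 : ‖e.δ N‖ ≠ 0 := norm_ne_zero_iff.mpr (e.δ_ne N)
  simp only [f, d]
  field_simp

lemma huQ (N : ℕ) : e.u N * e.Q N = (e.eps N : ℂ) ^ 2 * e.δ N := by
  simp only [Q]
  linear_combination ((e.eps N : ℂ)) ^ 2 * (e.δ N) * e.hnorm N

lemma f_eq_Q (N : ℕ) : e.f N = e.d N / ‖e.Q N‖ := by
  have h := congrArg norm (e.huQ N)
  rw [norm_mul, norm_mul, norm_pow, Complex.norm_real, Real.norm_eq_abs, abs_of_pos (e.heps N)] at h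
  have h1 : e.eps N ≠ 0 := e.eps_ne N
  have h2 : ‖e.Q N‖ ≠ 0 := norm_ne_zero_iff.mpr (e.Q_ne N)
  simp only [f, d]
  field_simp
  nlinarith [h]

lemma f_bounded {ω : ℂ} (hω : ω ≠ 0) (hQ : Tendsto e.Q atTop (nhds ω)) :
    ∃ C, ∀ᶠ N in atTop, e.f N ≤ C := by
  refine ⟨1 / (‖ω‖ / 2), ?_⟩
  have habs : Tendsto (fun N => ‖e.Q N‖) atTop (nhds (‖ω‖)) :=
    (continuous_norm.tendsto ω).comp hQ
  have hpos : 0 < ‖ω‖ / 2 := by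
    have := norm_pos_iff.mpr hω
    linarith
  filter_upwards [habs.eventually (eventually_gt_nhds (show ‖ω‖ / 2 < ‖ω‖ by linarith))] with N hN
  rw [e.f_eq_Q N]
  exact div_le_div₀ zero_le_one (e.d_le_one N) hpos (le_of_lt hN)

lemma f_zero {ω : ℂ} (hω : ω ≠ 0) (hP : Tendsto e.P atTop (nhds 0))
    (hQ : Tendsto e.Q atTop (nhds ω)) : Tendsto e.f atTop (nhds 0) := by
  have habsP : Tendsto (fun N => ‖e.P N‖) atTop (nhds 0) := by
    simpa [Function.comp_def] using (continuous_norm.tendsto 0).comp hP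
  have habsQ : Tendsto (fun N => ‖e.Q N‖) atTop (nhds (‖ω‖)) :=
    (continuous_norm.tendsto ω).comp hQ
  have h4 : Tendsto (fun N => e.d N ^ 4) atTop (nhds 0) := by
    have := habsP.mul habsQ
    rw [zero_mul] at this
    refine this.congr fun N => e.absPQ N
  have hd : Tendsto e.d atTop (nhds 0) :=
    tendsto_of_pow_four (fun N => le_of_lt (e.d_pos N)) h4
  have : Tendsto (fun N => e.d N / ‖e.Q N‖) atTop (nhds 0) := by
    have := hd.div habsQ (norm_ne_zero_iff.mpr hω)
    rw [zero_div] at this; exact this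
  exact this.congr fun N => (e.f_eq_Q N).symm

lemma f_lower {ζ : ℂ} (hζ : ζ ≠ 0) (hP : Tendsto e.P atTop (nhds ζ)) :
    ∀ᶠ N in atTop, ‖ζ‖ / 2 ≤ e.f N := by
  have habs : Tendsto (fun N => ‖e.P N‖) atTop (nhds (‖ζ‖)) :=
    (continuous_norm.tendsto ζ).comp hP
  have hpos : 0 < ‖ζ‖ / 2 := by
    have := norm_pos_iff.mpr hζ
    linarith
  filter_upwards [habs.eventually (eventually_gt_nhds (show ‖ζ‖ / 2 < ‖ζ‖ by linarith))] with N hN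
  rw [e.f_eq_P N]
  have hd3 : 0 < e.d N ^ 3 := pow_pos (e.d_pos N) 3
  rw [le_div_iff₀ hd3]
  have hd3le : e.d N ^ 3 ≤ 1 :=
    pow_le_one₀ (le_of_lt (e.d_pos N)) (e.d_le_one N)
  nlinarith

lemma f_atTop {ζ : ℂ} (hζ : ζ ≠ 0) (hP : Tendsto e.P atTop (nhds ζ))
    (hQ : Tendsto e.Q atTop (nhds 0)) : Tendsto e.f atTop atTop := by
  have habsP : Tendsto (fun N => ‖e.P N‖) atTop (nhds (‖ζ‖)) :=
    (continuous_norm.tendsto ζ).comp hP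
  have habsQ : Tendsto (fun N => ‖e.Q N‖) atTop (nhds 0) := by
    simpa [Function.comp_def] using (continuous_norm.tendsto 0).comp hQ
  have h4 : Tendsto (fun N => e.d N ^ 4) atTop (nhds 0) := by
    have := habsP.mul habsQ
    rw [mul_zero] at this
    refine this.congr fun N => e.absPQ N
  have hd : Tendsto e.d atTop (nhds 0) :=
    tendsto_of_pow_four (fun N => le_of_lt (e.d_pos N)) h4
  have hd3 : Tendsto (fun N => e.d N ^ 3) atTop (nhds 0) := by
    have : Tendsto (fun x : ℝ => x ^ 3) (nhds 0) (nhds 0) := by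
      have := (continuous_pow 3).tendsto (0:ℝ)
      simpa using this
    exact this.comp hd
  have hd3' : Tendsto (fun N => e.d N ^ 3) atTop (nhdsWithin 0 (Set.Ioi 0)) :=
    tendsto_nhdsWithin_of_tendsto_nhds_of_eventually_within _ hd3
      (Eventually.of_forall fun N => pow_pos (e.d_pos N) 3)
  have hinv : Tendsto (fun N => (e.d N ^ 3)⁻¹) atTop atTop :=
    hd3'.inv_tendsto_nhdsGT_zero
  have := Filter.Tendsto.pos_mul_atTop (norm_pos_iff.mpr hζ) habsP hinv
  refine this.congr fun N => ?_
  rw [e.f_eq_P N, div_eq_mul_inv]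

end EdgeData

open EdgeData in
lemma S1 (e1 e2 e3 : EdgeData)
    (t1 : ∀ N, e1.f N ≤ e2.f N + e3.f N)
    (t2 : ∀ N, e2.swap.f N ≤ e1.swap.f N + e3.swap.f N)
    {ζ1 ζ3 ω1 ω2 ω3 : ℂ}
    (hP1 : Tendsto e1.P atTop (nhds ζ1)) (hQ1 : Tendsto e1.Q atTop (nhds ω1))
    (hQ2 : Tendsto e2.Q atTop (nhds ω2))
    (hP3 : Tendsto e3.P atTop (nhds ζ3)) (hQ3 : Tendsto e3.Q atTop (nhds ω3))
    (hζ1 : ζ1 ≠ 0) (hω1 : ω1 = 0) (hω2 : ω2 ≠ 0)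
    (h3 : ζ3 ≠ 0 ∨ ω3 ≠ 0) : False := by
  by_cases hω3 : ω3 = 0
  · -- e3 is a z-only edge; use the swapped (w) picture
    have hζ3 : ζ3 ≠ 0 := h3.resolve_right (by simpa [hω3])
    have hl : ∀ᶠ N in atTop, ‖ω2‖ / 2 ≤ e2.swap.f N :=
      e2.swap.f_lower hω2 (by rw [swap_P]; exact hQ2)
    have hz1 : Tendsto e1.swap.f atTop (nhds 0) :=
      e1.swap.f_zero hζ1 (by rw [swap_P]; exact hω1 ▸ hQ1) (by rw [swap_Q]; exact hP1)
    have hz3 : Tendsto e3.swap.f atTop (nhds 0) :=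
      e3.swap.f_zero hζ3 (by rw [swap_P]; exact hω3 ▸ hQ3) (by rw [swap_Q]; exact hP3)
    have hpos : 0 < ‖ω2‖ / 2 := by
      have := norm_pos_iff.mpr hω2
      linarith
    exact contra_pos hpos t2 hl hz1 hz3
  · exact contra_inf t1 (e1.f_atTop hζ1 hP1 (hω1 ▸ hQ1))
      (e2.f_bounded hω2 hQ2) (e3.f_bounded hω3 hQ3)

end FourthRuleAux

namespace FourthRuleAux

noncomputable def mkEdge {n : ℕ} {m : Fin n → ℂ} (S : SingularSeq n m) (p q : Fin n)
    (hpq : p ≠ q) : EdgeData where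
  eps := S.eps
  δ := fun N => S.delta N p q
  u := fun N => S.z N p - S.z N q
  v := fun N => S.w N p - S.w N q
  heps := S.eps_pos
  hnorm := fun N => by linear_combination S.normalize N p q hpq
  hPle := fun N => by
    have h := (S.maxZ N).2 (Or.inr ⟨p, q, hpq, rfl⟩)
    have he := S.eps_pos N
    have h2 : S.eps N ^ (-2 : ℤ) = (S.eps N ^ 2)⁻¹ := by
      rw [zpow_neg]; norm_num [zpow_ofNat]
    rw [h2] at h
    have h3 : ‖(S.eps N : ℂ) ^ 2 * (S.delta N p q ^ 3 * (S.z N p - S.z N q))‖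
        = S.eps N ^ 2 * ‖Zq (S.delta N) (S.z N) p q‖ := by
      simp [Zq, map_mul, map_pow, Complex.norm_real, abs_of_pos he]
    rw [h3]
    calc S.eps N ^ 2 * ‖Zq (S.delta N) (S.z N) p q‖
        ≤ S.eps N ^ 2 * (S.eps N ^ 2)⁻¹ := by
          exact mul_le_mul_of_nonneg_left h (by positivity)
      _ = 1 := mul_inv_cancel₀ (by positivity)
  hQle := fun N => by
    have h := (S.maxW N).2 (Or.inr ⟨p, q, hpq, rfl⟩)
    have he := S.eps_pos N
    have h2 : S.eps N ^ (-2 : ℤ) = (S.eps N ^ 2)⁻¹ := by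
      rw [zpow_neg]; norm_num [zpow_ofNat]
    rw [h2] at h
    have h3 : ‖(S.eps N : ℂ) ^ 2 * (S.delta N p q ^ 3 * (S.w N p - S.w N q))‖
        = S.eps N ^ 2 * ‖Zq (S.delta N) (S.w N) p q‖ := by
      simp [Zq, map_mul, map_pow, Complex.norm_real, abs_of_pos he]
    rw [h3]
    calc S.eps N ^ 2 * ‖Zq (S.delta N) (S.w N) p q‖
        ≤ S.eps N ^ 2 * (S.eps N ^ 2)⁻¹ := by
          exact mul_le_mul_of_nonneg_left h (by positivity)
      _ = 1 := mul_inv_cancel₀ (by positivity)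

lemma tri_div {ε : ℝ} (hε : 0 < ε) (a b c : ℂ) :
    ‖a - c‖ / ε ≤ ‖a - b‖ / ε + ‖b - c‖ / ε := by
  rw [← add_div]
  gcongr
  exact norm_sub_le_norm_sub_add_norm_sub a b c

end FourthRuleAux

theorem fourth_rule_of_triangles (n : ℕ) (hn : 3 ≤ n) (m : Fin n → ℂ)
    (hm : ∀ I : Finset (Fin n), I.Nonempty → ∑ k ∈ I, m k ≠ 0)
    (S : SingularSeq n m) (A B : Matrix (Fin n) (Fin n) ℕ)
    (hAB : IsZWMatrices S A B) :
    ∀ i j k : Fin n, i < j → j < k →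
      (A i j + B i j) * (A j k + B j k) * (A i k + B i k) *
          max (A i j + A j k + A i k) (B i j + B j k + B i k) ∈ ({0, 3, 24} : Set ℕ) := by
  intro i j k hij hjk
  have hij' : i ≠ j := ne_of_lt hij
  have hjk' : j ≠ k := ne_of_lt hjk
  have hik' : i ≠ k := ne_of_lt (hij.trans hjk)
  by_cases hc12 : A i j + B i j = 0
  · rw [hc12]; simp
  by_cases hc23 : A j k + B j k = 0
  · rw [hc23]; simp
  by_cases hc13 : A i k + B i k = 0
  · rw [hc13]; simp
  obtain ⟨ζ12, hζ12⟩ := S.conv_Z i j hij'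
  obtain ⟨ω12, hω12⟩ := S.conv_W i j hij'
  obtain ⟨ζ23, hζ23⟩ := S.conv_Z j k hjk'
  obtain ⟨ω23, hω23⟩ := S.conv_W j k hjk'
  obtain ⟨ζ13, hζ13⟩ := S.conv_Z i k hik'
  obtain ⟨ω13, hω13⟩ := S.conv_W i k hik'
  set e12 := FourthRuleAux.mkEdge S i j hij' with he12
  set e23 := FourthRuleAux.mkEdge S j k hjk' with he23
  set e13 := FourthRuleAux.mkEdge S i k hik' with he13
  have hP12 : Tendsto e12.P atTop (nhds ζ12) := hζ12
  have hQ12 : Tendsto e12.Q atTop (nhds ω12) := hω12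
  have hP23 : Tendsto e23.P atTop (nhds ζ23) := hζ23
  have hQ23 : Tendsto e23.Q atTop (nhds ω23) := hω23
  have hP13 : Tendsto e13.P atTop (nhds ζ13) := hζ13
  have hQ13 : Tendsto e13.Q atTop (nhds ω13) := hω13
  have hA12 : ζ12 ≠ 0 → A i j = 1 := fun h =>
    (hAB.off_A i j hij').2 fun ht => h (tendsto_nhds_unique hζ12 ht)
  have hA12' : ζ12 = 0 → A i j = 0 := fun h =>
    (hAB.zeroOne_A i j).resolve_right fun h1 => (hAB.off_A i j hij').1 h1 (h ▸ hζ12)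
  have hB12 : ω12 ≠ 0 → B i j = 1 := fun h =>
    (hAB.off_B i j hij').2 fun ht => h (tendsto_nhds_unique hω12 ht)
  have hB12' : ω12 = 0 → B i j = 0 := fun h =>
    (hAB.zeroOne_B i j).resolve_right fun h1 => (hAB.off_B i j hij').1 h1 (h ▸ hω12)
  have hA23 : ζ23 ≠ 0 → A j k = 1 := fun h =>
    (hAB.off_A j k hjk').2 fun ht => h (tendsto_nhds_unique hζ23 ht)
  have hA23' : ζ23 = 0 → A j k = 0 := fun h =>
    (hAB.zeroOne_A j k).resolve_right fun h1 => (hAB.off_A j k hjk').1 h1 (h ▸ hζ23)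
  have hB23 : ω23 ≠ 0 → B j k = 1 := fun h =>
    (hAB.off_B j k hjk').2 fun ht => h (tendsto_nhds_unique hω23 ht)
  have hB23' : ω23 = 0 → B j k = 0 := fun h =>
    (hAB.zeroOne_B j k).resolve_right fun h1 => (hAB.off_B j k hjk').1 h1 (h ▸ hω23)
  have hA13 : ζ13 ≠ 0 → A i k = 1 := fun h =>
    (hAB.off_A i k hik').2 fun ht => h (tendsto_nhds_unique hζ13 ht)
  have hA13' : ζ13 = 0 → A i k = 0 := fun h =>
    (hAB.zeroOne_A i k).resolve_right fun h1 => (hAB.off_A i k hik').1 h1 (h ▸ hζ13)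
  have hB13 : ω13 ≠ 0 → B i k = 1 := fun h =>
    (hAB.off_B i k hik').2 fun ht => h (tendsto_nhds_unique hω13 ht)
  have hB13' : ω13 = 0 → B i k = 0 := fun h =>
    (hAB.zeroOne_B i k).resolve_right fun h1 => (hAB.off_B i k hik').1 h1 (h ▸ hω13)
  have hz12 : ζ12 ≠ 0 ∨ ω12 ≠ 0 := by
    by_contra hcon
    push_neg at hcon
    exact hc12 (by rw [hA12' hcon.1, hB12' hcon.2])
  have hz23 : ζ23 ≠ 0 ∨ ω23 ≠ 0 := by
    by_contra hcon
    push_neg at hcon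
    exact hc23 (by rw [hA23' hcon.1, hB23' hcon.2])
  have hz13 : ζ13 ≠ 0 ∨ ω13 ≠ 0 := by
    by_contra hcon
    push_neg at hcon
    exact hc13 (by rw [hA13' hcon.1, hB13' hcon.2])
  have tu12 : ∀ N, e12.f N ≤ e23.f N + e13.f N := fun N => by
    have h := FourthRuleAux.tri_div (S.eps_pos N) (S.z N i) (S.z N k) (S.z N j)
    rw [norm_sub_rev (S.z N k) (S.z N j)] at h
    show ‖S.z N i - S.z N j‖ / S.eps N ≤
      ‖S.z N j - S.z N k‖ / S.eps N + ‖S.z N i - S.z N k‖ / S.eps N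
    linarith
  have tu23 : ∀ N, e23.f N ≤ e12.f N + e13.f N := fun N => by
    have h := FourthRuleAux.tri_div (S.eps_pos N) (S.z N j) (S.z N i) (S.z N k)
    rw [norm_sub_rev (S.z N j) (S.z N i)] at h
    show ‖S.z N j - S.z N k‖ / S.eps N ≤
      ‖S.z N i - S.z N j‖ / S.eps N + ‖S.z N i - S.z N k‖ / S.eps N
    linarith
  have tu13 : ∀ N, e13.f N ≤ e12.f N + e23.f N := fun N => by
    have h := FourthRuleAux.tri_div (S.eps_pos N) (S.z N i) (S.z N j) (S.z N k)
    show ‖S.z N i - S.z N k‖ / S.eps N ≤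
      ‖S.z N i - S.z N j‖ / S.eps N + ‖S.z N j - S.z N k‖ / S.eps N
    linarith
  have tv12 : ∀ N, e12.swap.f N ≤ e23.swap.f N + e13.swap.f N := fun N => by
    have h := FourthRuleAux.tri_div (S.eps_pos N) (S.w N i) (S.w N k) (S.w N j)
    rw [norm_sub_rev (S.w N k) (S.w N j)] at h
    show ‖S.w N i - S.w N j‖ / S.eps N ≤
      ‖S.w N j - S.w N k‖ / S.eps N + ‖S.w N i - S.w N k‖ / S.eps N
    linarith
  have tv23 : ∀ N, e23.swap.f N ≤ e12.swap.f N + e13.swap.f N := fun N => by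
    have h := FourthRuleAux.tri_div (S.eps_pos N) (S.w N j) (S.w N i) (S.w N k)
    rw [norm_sub_rev (S.w N j) (S.w N i)] at h
    show ‖S.w N j - S.w N k‖ / S.eps N ≤
      ‖S.w N i - S.w N j‖ / S.eps N + ‖S.w N i - S.w N k‖ / S.eps N
    linarith
  have tv13 : ∀ N, e13.swap.f N ≤ e12.swap.f N + e23.swap.f N := fun N => by
    have h := FourthRuleAux.tri_div (S.eps_pos N) (S.w N i) (S.w N j) (S.w N k)
    show ‖S.w N i - S.w N k‖ / S.eps N ≤
      ‖S.w N i - S.w N j‖ / S.eps N + ‖S.w N j - S.w N k‖ / S.eps N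
    linarith
  by_cases hW12 : ω12 = 0
  · have hZ12 : ζ12 ≠ 0 := hz12.resolve_right (not_not_intro hW12)
    have hW23 : ω23 = 0 := by
      by_contra h
      exact FourthRuleAux.S1 e12 e23 e13 tu12 tv23
        hP12 hQ12 hQ23 hP13 hQ13 hZ12 hW12 h hz13
    have hW13 : ω13 = 0 := by
      by_contra h
      exact FourthRuleAux.S1 e12 e13 e23 (fun N => by have := tu12 N; linarith)
        (fun N => by have := tv13 N; linarith)
        hP12 hQ12 hQ13 hP23 hQ23 hZ12 hW12 h hz23
    have hZ23 : ζ23 ≠ 0 := hz23.resolve_right (not_not_intro hW23)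
    have hZ13 : ζ13 ≠ 0 := hz13.resolve_right (not_not_intro hW13)
    rw [hA12 hZ12, hA23 hZ23, hA13 hZ13, hB12' hW12, hB23' hW23, hB13' hW13]
    norm_num [Set.mem_insert_iff, Set.mem_singleton_iff]
  · by_cases hW23 : ω23 = 0
    · have hZ23 : ζ23 ≠ 0 := hz23.resolve_right (not_not_intro hW23)
      exact (FourthRuleAux.S1 e23 e12 e13 tu23 tv12
        hP23 hQ23 hQ12 hP13 hQ13 hZ23 hW23 hW12 hz13).elim
    · by_cases hW13 : ω13 = 0
      · have hZ13 : ζ13 ≠ 0 := hz13.resolve_right (not_not_intro hW13)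
        exact (FourthRuleAux.S1 e13 e12 e23 tu13 (fun N => by have := tv12 N; linarith)
          hP13 hQ13 hQ12 hP23 hQ23 hZ13 hW13 hW12 hz23).elim
      · by_cases hZ12 : ζ12 = 0
        · have hZ23 : ζ23 = 0 := by
            by_contra h
            exact FourthRuleAux.S1 e12.swap e23.swap e13.swap tv12 (fun N => tu23 N)
              hQ12 hP12 hP23 hQ13 hP13 hW12 hZ12 h (Or.inl hW13)
          have hZ13 : ζ13 = 0 := by
            by_contra h
            exact FourthRuleAux.S1 e12.swap e13.swap e23.swap
              (fun N => by have := tv12 N; linarith) (fun N => tu13 N)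
              hQ12 hP12 hP13 hQ23 hP23 hW12 hZ12 h (Or.inl hW23)
          rw [hA12' hZ12, hA23' hZ23, hA13' hZ13, hB12 hW12, hB23 hW23, hB13 hW13]
          norm_num [Set.mem_insert_iff, Set.mem_singleton_iff]
        · by_cases hZ23 : ζ23 = 0
          · exact (FourthRuleAux.S1 e23.swap e12.swap e13.swap tv23 (fun N => tu12 N)
              hQ23 hP23 hP12 hQ13 hP13 hW23 hZ23 hZ12 (Or.inl hW13)).elim
          · by_cases hZ13 : ζ13 = 0
            · exact (FourthRuleAux.S1 e13.swap e12.swap e23.swap tv13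
                (fun N => by show e12.f N ≤ e13.f N + e23.f N; have := tu12 N; linarith)
                hQ13 hP13 hP12 hQ23 hP23 hW13 hZ13 hZ12 (Or.inl hW23)).elim
            · rw [hA12 hZ12, hA23 hZ23, hA13 hZ13, hB12 hW12, hB23 hW23, hB13 hW13]
              norm_num [Set.mem_insert_iff, Set.mem_singleton_iff]
end

section
/- (First Rule of Quadrilaterals) Let n ≥ 4 and let A and B be the z-matrix and w-matrix of a singular sequence. Then for all pairwise distinct indices i, j, k, l in {1,…,n}, a_{ij} + a_{ik} + a_{il} + a_{jk} + a_{jl} + a_{kl} ≠ 5. The same statement holds with A replaced by B. -/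
open Filter Finset

/-! ### Auxiliary real inequalities -/

lemma FRQ.cube_add {a b : ℝ} (ha : 0 ≤ a) (hb : 0 ≤ b) : (a + b)^3 ≤ 4*(a^3 + b^3) := by
  nlinarith [mul_nonneg (add_nonneg ha hb) (sq_nonneg (a - b))]

lemma FRQ.tri {X1 X2 X3 Y1 Y2 Y3 E K : ℝ}
    (pX1 : 0 < X1) (pX2 : 0 < X2) (pX3 : 0 < X3)
    (pY1 : 0 ≤ Y1) (pY2 : 0 ≤ Y2) (pY3 : 0 ≤ Y3)
    (hE : 0 < E) (hK : 1 ≤ K)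
    (l2 : E ≤ X2 * Y2 ^ 3)
    (u1 : X1 * Y1 ^ 3 ≤ K * E) (u3 : X3 * Y3 ^ 3 ≤ K * E)
    (hX : X1 ≤ X2 + X3) (hY : Y2 ≤ Y1 + Y3) : X1 ≤ 32 * K * X2 := by
  have hY2 : Y2 ^ 3 ≤ 4 * (Y1 ^ 3 + Y3 ^ 3) := by
    calc Y2 ^ 3 ≤ (Y1 + Y3) ^ 3 := pow_le_pow_left₀ pY2 hY 3
    _ ≤ 4 * (Y1 ^ 3 + Y3 ^ 3) := FRQ.cube_add pY1 pY3
  have s1 : E ≤ 4 * X2 * (Y1 ^ 3 + Y3 ^ 3) := by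
    nlinarith [mul_le_mul_of_nonneg_left hY2 pX2.le]
  have s2 : E * (X1 * X3) ≤ 4 * X2 * (X1 * X3 * (Y1 ^ 3 + Y3 ^ 3)) := by
    nlinarith [mul_le_mul_of_nonneg_right s1 (mul_pos pX1 pX3).le]
  have s3 : X1 * X3 * (Y1 ^ 3 + Y3 ^ 3) ≤ K * E * (X1 + X3) := by
    nlinarith [mul_le_mul_of_nonneg_left u1 pX3.le, mul_le_mul_of_nonneg_left u3 pX1.le]
  have key : X1 * X3 ≤ 4 * K * (X2 * (X1 + X3)) := by
    have s4 : E * (X1 * X3) ≤ E * (4 * K * (X2 * (X1 + X3))) := by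
      nlinarith [mul_le_mul_of_nonneg_left s3 (by positivity : (0:ℝ) ≤ 4 * X2)]
    exact le_of_mul_le_mul_left s4 hE
  rcases le_total X1 X3 with h | h
  · have : X1 * X3 ≤ 8 * K * X2 * X3 := by
      nlinarith [key, mul_nonneg (mul_nonneg (by linarith : (0:ℝ) ≤ 4*K) pX2.le)
        (by linarith : (0:ℝ) ≤ X3 - X1)]
    have : X1 ≤ 8 * K * X2 := le_of_mul_le_mul_right this pX3
    nlinarith
  · have : X1 * X3 ≤ 8 * K * X2 * X1 := by
      nlinarith [key, mul_nonneg (mul_nonneg (by linarith : (0:ℝ) ≤ 4*K) pX2.le)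
        (by linarith : (0:ℝ) ≤ X1 - X3)]
    have h3 : X3 ≤ 8 * K * X2 := by
      have := le_of_mul_le_mul_right (by nlinarith : X3 * X1 ≤ (8 * K * X2) * X1) pX1
      linarith
    nlinarith

set_option maxHeartbeats 1000000 in
lemma FRQ.final_ineq
    {Xij Xik Xil Xjk Xjl Xkl Yij Yik Yil Yjk Yjl Ykl E K G : ℝ}
    (pXij : 0 < Xij) (pXik : 0 < Xik) (pXil : 0 < Xil)
    (pXjk : 0 < Xjk) (pXjl : 0 < Xjl) (pXkl : 0 < Xkl)
    (pYij : 0 ≤ Yij) (pYik : 0 ≤ Yik) (pYil : 0 ≤ Yil)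
    (pYjk : 0 ≤ Yjk) (pYjl : 0 ≤ Yjl) (pYkl : 0 ≤ Ykl)
    (hE : 0 < E) (hK : 1 ≤ K) (hG : 0 < G)
    (lij : E ≤ Xij * Yij ^ 3) (lik : E ≤ Xik * Yik ^ 3) (lil : E ≤ Xil * Yil ^ 3)
    (uij : Xij * Yij ^ 3 ≤ K * E) (uik : Xik * Yik ^ 3 ≤ K * E)
    (uil : Xil * Yil ^ 3 ≤ K * E) (ujk : Xjk * Yjk ^ 3 ≤ K * E)
    (ujl : Xjl * Yjl ^ 3 ≤ K * E)
    (hkl : Xkl * Ykl ^ 3 * G ^ 2 = E)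
    (tX1 : Xik ≤ Xij + Xjk) (tY1 : Yij ≤ Yik + Yjk)
    (tX2 : Xij ≤ Xil + Xjl) (tY2 : Yil ≤ Yij + Yjl)
    (tX3 : Xil ≤ Xij + Xjl) (tY3 : Yij ≤ Yil + Yjl)
    (tX4 : Xij ≤ Xik + Xjk) (tY4 : Yik ≤ Yij + Yjk)
    (tXkl : Xkl ≤ Xik + Xil) (tYkl : Ykl ≤ Yik + Yil)
    (hGs : 200 * K ^ 2 * G < 1) : False := by
  have hK0 : (0:ℝ) < K := lt_of_lt_of_le one_pos hK
  have t1 : Xik ≤ 32 * K * Xij :=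
    FRQ.tri pXik pXij pXjk pYik pYij pYjk hE hK lij uik ujk tX1 tY1
  have t2 : Xij ≤ 32 * K * Xil :=
    FRQ.tri pXij pXil pXjl pYij pYil pYjl hE hK lil uij ujl tX2 tY2
  have t3 : Xil ≤ 32 * K * Xij :=
    FRQ.tri pXil pXij pXjl pYil pYij pYjl hE hK lij uil ujl tX3 tY3
  have t4 : Xij ≤ 32 * K * Xik :=
    FRQ.tri pXij pXik pXjk pYij pYik pYjk hE hK lik uij ujk tX4 tY4
  have h32K : (0:ℝ) ≤ 32 * K := by linarith
  have huv : Xik ≤ 1024 * K ^ 2 * Xil := by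
    calc Xik ≤ 32 * K * Xij := t1
    _ ≤ 32 * K * (32 * K * Xil) := mul_le_mul_of_nonneg_left t2 h32K
    _ = 1024 * K ^ 2 * Xil := by ring
  have hvu : Xil ≤ 1024 * K ^ 2 * Xik := by
    calc Xil ≤ 32 * K * Xij := t3
    _ ≤ 32 * K * (32 * K * Xik) := mul_le_mul_of_nonneg_left t4 h32K
    _ = 1024 * K ^ 2 * Xik := by ring
  have hYkl3 : Ykl ^ 3 ≤ 4 * (Yik ^ 3 + Yil ^ 3) :=
    le_trans (pow_le_pow_left₀ pYkl tYkl 3) (FRQ.cube_add pYik pYil)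
  have hSkl : Xkl * Ykl ^ 3 ≤ (Xik + Xil) * (4 * (Yik ^ 3 + Yil ^ 3)) :=
    mul_le_mul tXkl hYkl3 (by positivity) (by positivity)
  have hK2 : (0:ℝ) ≤ 1024 * K ^ 2 := by positivity
  have hKE : K * E ≤ K ^ 3 * E := by
    have h3 : K ≤ K ^ 3 := by nlinarith
    exact mul_le_mul_of_nonneg_right h3 hE.le
  have hA : Xik * Yil ^ 3 ≤ 1024 * K ^ 3 * E := by
    calc Xik * Yil ^ 3 ≤ 1024 * K ^ 2 * Xil * Yil ^ 3 :=
          mul_le_mul_of_nonneg_right huv (pow_nonneg pYil 3)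
    _ = 1024 * K ^ 2 * (Xil * Yil ^ 3) := by ring
    _ ≤ 1024 * K ^ 2 * (K * E) := mul_le_mul_of_nonneg_left uil hK2
    _ = 1024 * K ^ 3 * E := by ring
  have hB : Xil * Yik ^ 3 ≤ 1024 * K ^ 3 * E := by
    calc Xil * Yik ^ 3 ≤ 1024 * K ^ 2 * Xik * Yik ^ 3 :=
          mul_le_mul_of_nonneg_right hvu (pow_nonneg pYik 3)
    _ = 1024 * K ^ 2 * (Xik * Yik ^ 3) := by ring
    _ ≤ 1024 * K ^ 2 * (K * E) := mul_le_mul_of_nonneg_left uik hK2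
    _ = 1024 * K ^ 3 * E := by ring
  have hM : Xkl * Ykl ^ 3 ≤ 16400 * K ^ 3 * E := by
    have hexp : (Xik + Xil) * (4 * (Yik ^ 3 + Yil ^ 3)) =
        4 * (Xik * Yik ^ 3) + 4 * (Xik * Yil ^ 3) + 4 * (Xil * Yik ^ 3)
          + 4 * (Xil * Yil ^ 3) := by ring
    linarith [hSkl, hA, hB, uik, uil, hKE, hexp.le, hexp.ge]
  have hMG : E ≤ 16400 * K ^ 3 * E * G ^ 2 := by
    have h := mul_le_mul_of_nonneg_right hM (sq_nonneg G)
    rw [hkl] at h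
    exact h
  have ha : (0:ℝ) < 200 * K ^ 2 * G := by positivity
  have hq : 40000 * K ^ 4 * G ^ 2 < 1 := by
    have hsq := mul_lt_mul_of_pos_left hGs ha
    calc 40000 * K ^ 4 * G ^ 2 = 200 * K ^ 2 * G * (200 * K ^ 2 * G) := by ring
    _ < 200 * K ^ 2 * G * 1 := hsq
    _ < 1 := by linarith
  have h1 : 40000 * K ^ 4 * E ≤ 40000 * K ^ 4 * (16400 * K ^ 3 * E * G ^ 2) :=
    mul_le_mul_of_nonneg_left hMG (by positivity)
  have h2 : 16400 * K ^ 3 * E * (40000 * K ^ 4 * G ^ 2) < 16400 * K ^ 3 * E * 1 :=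
    mul_lt_mul_of_pos_left hq (by positivity)
  have h3 : 40000 * K ^ 4 * (16400 * K ^ 3 * E * G ^ 2) =
      16400 * K ^ 3 * E * (40000 * K ^ 4 * G ^ 2) := by ring
  have h4 : 16400 * K ^ 3 * E < 40000 * K ^ 4 * E := by
    nlinarith [mul_pos (pow_pos hK0 3) hE]
  linarith

/-! ### Auxiliary facts about complex absolute values -/

lemma FRQ.abs_tri3 (x y z : ℂ) :
    ‖x - z‖ ≤ ‖x - y‖ + ‖y - z‖ :=
  norm_sub_le_norm_sub_add_norm_sub x y z

lemma FRQ.abs_swap (x y : ℂ) : ‖x - y‖ = ‖y - x‖ :=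
  norm_sub_rev x y

lemma FRQ.atN_facts {n : ℕ} (δ : Fin n → Fin n → ℂ) (z w : Fin n → ℂ) (ε : ℝ) (hε : 0 < ε)
    (a b : Fin n)
    (hnorm : δ a b ^ 2 * (z b - z a) * (w b - w a) = 1)
    (hmax : ‖Zq δ z a b‖ ≤ ε ^ (-2 : ℤ)) :
    0 < ‖z a - z b‖ ∧ 0 < ‖w a - w b‖ ∧
    0 < ‖(ε:ℂ)^2 * Zq δ z a b‖ ∧
    ‖(ε:ℂ)^2 * Zq δ z a b‖ ≤ 1 ∧
    ‖z a - z b‖ * ‖w a - w b‖^3 *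
      ‖(ε:ℂ)^2 * Zq δ z a b‖^2 = ε^4 := by
  have h3 : (δ a b ^ 2 * (z b - z a) * (w b - w a))^3 = 1 := by rw [hnorm]; norm_num
  have hid : (Zq δ z a b)^2 * ((z a - z b) * (w a - w b)^3) = 1 := by
    simp only [Zq]; linear_combination h3
  have hP : (Zq δ z a b)^2 * ((z a - z b) * (w a - w b)^3) ≠ 0 := by
    rw [hid]; exact one_ne_zero
  obtain ⟨hP1, hP2⟩ := mul_ne_zero_iff.mp hP
  obtain ⟨hz0, hw0⟩ := mul_ne_zero_iff.mp hP2
  have hZ0 : Zq δ z a b ≠ 0 := fun h => hP1 (by rw [h]; ring)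
  have hw0' : w a - w b ≠ 0 := fun h => hw0 (by rw [h]; ring)
  have habs : ‖Zq δ z a b‖^2 *
      (‖z a - z b‖ * ‖w a - w b‖^3) = 1 := by
    have := congrArg norm hid
    simpa [norm_mul, norm_pow] using this
  have hGe : ‖(ε:ℂ)^2 * Zq δ z a b‖ = ε^2 * ‖Zq δ z a b‖ := by
    simp [norm_mul, norm_pow, Complex.norm_real, abs_of_pos hε]
  have hzpow : ε ^ (-2 : ℤ) = (ε^2)⁻¹ := by
    rw [zpow_neg, zpow_two, sq]
  refine ⟨norm_pos_iff.mpr hz0, norm_pos_iff.mpr hw0', ?_, ?_, ?_⟩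
  · rw [hGe]; exact mul_pos (by positivity) (norm_pos_iff.mpr hZ0)
  · rw [hGe]
    have : ε^2 * ‖Zq δ z a b‖ ≤ ε^2 * (ε^2)⁻¹ := by
      rw [← hzpow]; exact mul_le_mul_of_nonneg_left hmax (sq_nonneg ε)
    rwa [mul_inv_cancel₀ (by positivity : ε^2 ≠ 0)] at this
  · rw [hGe]; linear_combination ε^4 * habs

lemma FRQ.upAux {X Y G E g K : ℝ} (pX : 0 < X) (pY : 0 < Y) (hg : 0 < g) (hgG : g ≤ G)
    (hid : X * Y ^ 3 * G ^ 2 = E) (hK : 1 ≤ K * g ^ 2) : X * Y ^ 3 ≤ K * E := by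
  have hG : 0 < G := lt_of_lt_of_le hg hgG
  have h1 : X * Y ^ 3 * g ^ 2 ≤ E := by
    rw [← hid]
    exact mul_le_mul_of_nonneg_left (pow_le_pow_left₀ hg.le hgG 2) (by positivity)
  have hK0 : 0 ≤ K := by nlinarith [sq_nonneg g]
  calc X * Y ^ 3 = X * Y ^ 3 * 1 := by ring
  _ ≤ X * Y ^ 3 * (K * g ^ 2) := mul_le_mul_of_nonneg_left hK (by positivity)
  _ = K * (X * Y ^ 3 * g ^ 2) := by ring
  _ ≤ K * E := mul_le_mul_of_nonneg_left h1 hK0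

lemma FRQ.lowAux {X Y G E : ℝ} (pX : 0 < X) (pY : 0 < Y) (hG0 : 0 < G) (hG1 : G ≤ 1)
    (hid : X * Y ^ 3 * G ^ 2 = E) : E ≤ X * Y ^ 3 := by
  calc E = X * Y ^ 3 * G ^ 2 := hid.symm
  _ ≤ X * Y ^ 3 * 1 := mul_le_mul_of_nonneg_left (by nlinarith) (by positivity)
  _ = X * Y ^ 3 := by ring

/-- eventual lower bound on a stroke -/
lemma FRQ.stroke_lb {n : ℕ} {m : Fin n → ℂ} (S : SingularSeq n m) (a b : Fin n) (hab : a ≠ b)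
    (hs : ¬ Tendsto (fun N => (S.eps N : ℂ) ^ 2 * Zq (S.delta N) (S.z N) a b) atTop (nhds 0)) :
    ∃ g : ℝ, 0 < g ∧ ∀ᶠ N in atTop,
      g ≤ ‖(S.eps N : ℂ) ^ 2 * Zq (S.delta N) (S.z N) a b‖ := by
  obtain ⟨L, hL⟩ := S.conv_Z a b hab
  have hL0 : L ≠ 0 := by rintro rfl; exact hs hL
  have hLpos : 0 < ‖L‖ := norm_pos_iff.mpr hL0
  refine ⟨‖L‖ / 2, by linarith, ?_⟩
  have habs : Tendsto (fun N => ‖(S.eps N : ℂ) ^ 2 * Zq (S.delta N) (S.z N) a b‖)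
      atTop (nhds ‖L‖) := by
    simpa using hL.norm
  exact habs.eventually (eventually_ge_nhds (by linarith))
lemma FRQ.core {n : ℕ} {m : Fin n → ℂ} (S : SingularSeq n m) (i j k l : Fin n)
    (hij : i ≠ j) (hik : i ≠ k) (hil : i ≠ l) (hjk : j ≠ k) (hjl : j ≠ l) (hkl : k ≠ l)
    (sij : ¬ Tendsto (fun N => (S.eps N : ℂ) ^ 2 * Zq (S.delta N) (S.z N) i j) atTop (nhds 0))
    (sik : ¬ Tendsto (fun N => (S.eps N : ℂ) ^ 2 * Zq (S.delta N) (S.z N) i k) atTop (nhds 0))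
    (sil : ¬ Tendsto (fun N => (S.eps N : ℂ) ^ 2 * Zq (S.delta N) (S.z N) i l) atTop (nhds 0))
    (sjk : ¬ Tendsto (fun N => (S.eps N : ℂ) ^ 2 * Zq (S.delta N) (S.z N) j k) atTop (nhds 0))
    (sjl : ¬ Tendsto (fun N => (S.eps N : ℂ) ^ 2 * Zq (S.delta N) (S.z N) j l) atTop (nhds 0))
    (s0 : Tendsto (fun N => (S.eps N : ℂ) ^ 2 * Zq (S.delta N) (S.z N) k l) atTop (nhds 0)) :
    False := by
  obtain ⟨g1, hg1, ev1⟩ := FRQ.stroke_lb S i j hij sij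
  obtain ⟨g2, hg2, ev2⟩ := FRQ.stroke_lb S i k hik sik
  obtain ⟨g3, hg3, ev3⟩ := FRQ.stroke_lb S i l hil sil
  obtain ⟨g4, hg4, ev4⟩ := FRQ.stroke_lb S j k hjk sjk
  obtain ⟨g5, hg5, ev5⟩ := FRQ.stroke_lb S j l hjl sjl
  set g : ℝ := min (min g1 g2) (min g3 (min g4 g5)) with hgdef
  have hg : 0 < g := lt_min (lt_min hg1 hg2) (lt_min hg3 (lt_min hg4 hg5))
  set K : ℝ := (g ^ 2)⁻¹ + 1 with hKdef
  have hK1 : 1 ≤ K := by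
    have : (0:ℝ) ≤ (g ^ 2)⁻¹ := by positivity
    rw [hKdef]; linarith
  have hKg2 : 1 ≤ K * g ^ 2 := by
    have hg2' : g ^ 2 ≠ 0 := by positivity
    rw [hKdef, add_mul, inv_mul_cancel₀ hg2']
    nlinarith [sq_nonneg g]
  have hη : (0:ℝ) < (200 * K ^ 2)⁻¹ := by
    have : (0:ℝ) < K := lt_of_lt_of_le one_pos hK1
    positivity
  have ev0 : ∀ᶠ N in atTop,
      ‖(S.eps N : ℂ) ^ 2 * Zq (S.delta N) (S.z N) k l‖ < (200 * K ^ 2)⁻¹ := by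
    have habs : Tendsto (fun N => ‖(S.eps N : ℂ) ^ 2 * Zq (S.delta N) (S.z N) k l‖)
        atTop (nhds 0) := by
      simpa using s0.norm
    exact habs.eventually (eventually_lt_nhds hη)
  obtain ⟨N, ⟨⟨⟨b1, b2⟩, b3⟩, ⟨b4, b5⟩⟩, b0⟩ :=
    (((((ev1.and ev2).and ev3).and (ev4.and ev5)).and ev0)).exists
  -- fixed-N data
  have hε := S.eps_pos N
  have memZ : ∀ a b : Fin n, a ≠ b →
      ‖Zq (S.delta N) (S.z N) a b‖ ≤ S.eps N ^ (-2 : ℤ) := fun a b hab =>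
    (S.maxZ N).2 (Or.inr ⟨a, b, hab, rfl⟩)
  have Fij := FRQ.atN_facts (S.delta N) (S.z N) (S.w N) (S.eps N) hε i j
    (S.normalize N i j hij) (memZ i j hij)
  have Fik := FRQ.atN_facts (S.delta N) (S.z N) (S.w N) (S.eps N) hε i k
    (S.normalize N i k hik) (memZ i k hik)
  have Fil := FRQ.atN_facts (S.delta N) (S.z N) (S.w N) (S.eps N) hε i l
    (S.normalize N i l hil) (memZ i l hil)
  have Fjk := FRQ.atN_facts (S.delta N) (S.z N) (S.w N) (S.eps N) hε j k
    (S.normalize N j k hjk) (memZ j k hjk)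
  have Fjl := FRQ.atN_facts (S.delta N) (S.z N) (S.w N) (S.eps N) hε j l
    (S.normalize N j l hjl) (memZ j l hjl)
  have Fkl := FRQ.atN_facts (S.delta N) (S.z N) (S.w N) (S.eps N) hε k l
    (S.normalize N k l hkl) (memZ k l hkl)
  obtain ⟨pXij, pYij, pGij, hGij1, hidij⟩ := Fij
  obtain ⟨pXik, pYik, pGik, hGik1, hidik⟩ := Fik
  obtain ⟨pXil, pYil, pGil, hGil1, hidil⟩ := Fil
  obtain ⟨pXjk, pYjk, pGjk, hGjk1, hidjk⟩ := Fjk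
  obtain ⟨pXjl, pYjl, pGjl, hGjl1, hidjl⟩ := Fjl
  obtain ⟨pXkl, pYkl, pGkl, hGkl1, hidkl⟩ := Fkl
  have hE : (0:ℝ) < S.eps N ^ 4 := by positivity
  -- lower bounds g ≤ G on the five strokes
  have hgij : g ≤ ‖(S.eps N : ℂ) ^ 2 * Zq (S.delta N) (S.z N) i j‖ :=
    le_trans (le_trans (min_le_left _ _) (min_le_left _ _)) b1
  have hgik : g ≤ ‖(S.eps N : ℂ) ^ 2 * Zq (S.delta N) (S.z N) i k‖ :=
    le_trans (le_trans (min_le_left _ _) (min_le_right _ _)) b2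
  have hgil : g ≤ ‖(S.eps N : ℂ) ^ 2 * Zq (S.delta N) (S.z N) i l‖ :=
    le_trans (le_trans (min_le_right _ _) (min_le_left _ _)) b3
  have hgjk : g ≤ ‖(S.eps N : ℂ) ^ 2 * Zq (S.delta N) (S.z N) j k‖ :=
    le_trans (le_trans (min_le_right _ _) (le_trans (min_le_right _ _) (min_le_left _ _))) b4
  have hgjl : g ≤ ‖(S.eps N : ℂ) ^ 2 * Zq (S.delta N) (S.z N) j l‖ :=
    le_trans (le_trans (min_le_right _ _) (le_trans (min_le_right _ _) (min_le_right _ _))) b5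
  -- upper and lower bounds for the stroke products
  have uij := FRQ.upAux pXij pYij hg hgij hidij hKg2
  have uik := FRQ.upAux pXik pYik hg hgik hidik hKg2
  have uil := FRQ.upAux pXil pYil hg hgil hidil hKg2
  have ujk := FRQ.upAux pXjk pYjk hg hgjk hidjk hKg2
  have ujl := FRQ.upAux pXjl pYjl hg hgjl hidjl hKg2
  have lij := FRQ.lowAux pXij pYij pGij hGij1 hidij
  have lik := FRQ.lowAux pXik pYik pGik hGik1 hidik
  have lil := FRQ.lowAux pXil pYil pGil hGil1 hidil
  -- smallness of G on the missing pair
  have hGs : 200 * K ^ 2 * ‖(S.eps N : ℂ) ^ 2 * Zq (S.delta N) (S.z N) k l‖ < 1 := by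
    have h200 : (0:ℝ) < 200 * K ^ 2 := by
      have : (0:ℝ) < K := lt_of_lt_of_le one_pos hK1
      positivity
    have := mul_lt_mul_of_pos_left b0 h200
    rwa [mul_inv_cancel₀ (ne_of_gt h200)] at this
  -- triangle inequalities
  exact FRQ.final_ineq pXij pXik pXil pXjk pXjl pXkl
    pYij.le pYik.le pYil.le pYjk.le pYjl.le pYkl.le hE hK1 pGkl
    lij lik lil uij uik uil ujk ujl hidkl
    (FRQ.abs_tri3 (S.z N i) (S.z N j) (S.z N k))
    (by have h := FRQ.abs_tri3 (S.w N i) (S.w N k) (S.w N j)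
        rwa [FRQ.abs_swap (S.w N k) (S.w N j)] at h)
    (by have h := FRQ.abs_tri3 (S.z N i) (S.z N l) (S.z N j)
        rwa [FRQ.abs_swap (S.z N l) (S.z N j)] at h)
    (FRQ.abs_tri3 (S.w N i) (S.w N j) (S.w N l))
    (FRQ.abs_tri3 (S.z N i) (S.z N j) (S.z N l))
    (by have h := FRQ.abs_tri3 (S.w N i) (S.w N l) (S.w N j)
        rwa [FRQ.abs_swap (S.w N l) (S.w N j)] at h)
    (by have h := FRQ.abs_tri3 (S.z N i) (S.z N k) (S.z N j)
        rwa [FRQ.abs_swap (S.z N k) (S.z N j)] at h)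
    (FRQ.abs_tri3 (S.w N i) (S.w N j) (S.w N k))
    (by have h := FRQ.abs_tri3 (S.z N k) (S.z N i) (S.z N l)
        rwa [FRQ.abs_swap (S.z N k) (S.z N i)] at h)
    (by have h := FRQ.abs_tri3 (S.w N k) (S.w N i) (S.w N l)
        rwa [FRQ.abs_swap (S.w N k) (S.w N i)] at h)
    hGs

/-- The `z ↔ w` swapped singular sequence. -/
noncomputable def FRQ.swap {n : ℕ} {m : Fin n → ℂ} (S : SingularSeq n m) : SingularSeq n m where
  z := S.w
  w := S.z
  delta := S.delta
  eps := S.eps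
  eps_pos := S.eps_pos
  eps_lim := S.eps_lim
  delta_symm := S.delta_symm
  eq_z := S.eq_w
  eq_w := S.eq_z
  normalize := fun N k l h => by linear_combination S.normalize N k l h
  maxZ := S.maxW
  maxW := S.maxZ
  conv_z := S.conv_w
  conv_w := S.conv_z
  conv_Z := S.conv_W
  conv_W := S.conv_Z

lemma FRQ.coreA {n : ℕ} {m : Fin n → ℂ} (S : SingularSeq n m)
    (A B : Matrix (Fin n) (Fin n) ℕ) (hAB : IsZWMatrices S A B) (i j k l : Fin n)
    (hij : i ≠ j) (hik : i ≠ k) (hil : i ≠ l) (hjk : j ≠ k) (hjl : j ≠ l) (hkl : k ≠ l)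
    (e1 : A i j = 1) (e2 : A i k = 1) (e3 : A i l = 1)
    (e4 : A j k = 1) (e5 : A j l = 1) (e0 : A k l = 0) : False := by
  refine FRQ.core S i j k l hij hik hil hjk hjl hkl
    ((hAB.off_A i j hij).mp e1) ((hAB.off_A i k hik).mp e2) ((hAB.off_A i l hil).mp e3)
    ((hAB.off_A j k hjk).mp e4) ((hAB.off_A j l hjl).mp e5) ?_
  by_contra hT
  have : A k l = 1 := (hAB.off_A k l hkl).mpr hT
  omega

lemma FRQ.coreB {n : ℕ} {m : Fin n → ℂ} (S : SingularSeq n m)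
    (A B : Matrix (Fin n) (Fin n) ℕ) (hAB : IsZWMatrices S A B) (i j k l : Fin n)
    (hij : i ≠ j) (hik : i ≠ k) (hil : i ≠ l) (hjk : j ≠ k) (hjl : j ≠ l) (hkl : k ≠ l)
    (e1 : B i j = 1) (e2 : B i k = 1) (e3 : B i l = 1)
    (e4 : B j k = 1) (e5 : B j l = 1) (e0 : B k l = 0) : False := by
  have hAB' : IsZWMatrices (FRQ.swap S) B A :=
    ⟨hAB.zeroOne_B, hAB.symm_B, hAB.zeroOne_A, hAB.symm_A,
      hAB.diag_B, hAB.off_B, hAB.diag_A, hAB.off_A⟩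
  exact FRQ.coreA (FRQ.swap S) B A hAB' i j k l hij hik hil hjk hjl hkl e1 e2 e3 e4 e5 e0

theorem first_rule_of_quadrilaterals (n : ℕ) (hn : 4 ≤ n) (m : Fin n → ℂ)
    (hm : ∀ I : Finset (Fin n), I.Nonempty → ∑ k ∈ I, m k ≠ 0)
    (S : SingularSeq n m) (A B : Matrix (Fin n) (Fin n) ℕ)
    (hAB : IsZWMatrices S A B) :
    ∀ i j k l : Fin n, i ≠ j → i ≠ k → i ≠ l → j ≠ k → j ≠ l → k ≠ l →
      A i j + A i k + A i l + A j k + A j l + A k l ≠ 5 ∧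
      B i j + B i k + B i l + B j k + B j l + B k l ≠ 5 := by
  intro i j k l hij hik hil hjk hjl hkl
  constructor
  · intro hsum
    rcases hAB.zeroOne_A i j with h1 | h1 <;>
    rcases hAB.zeroOne_A i k with h2 | h2 <;>
    rcases hAB.zeroOne_A i l with h3 | h3 <;>
    rcases hAB.zeroOne_A j k with h4 | h4 <;>
    rcases hAB.zeroOne_A j l with h5 | h5 <;>
    rcases hAB.zeroOne_A k l with h6 | h6 <;>
    first
    | omega
    | exact FRQ.coreA S A B hAB i j k l hij hik hil hjk hjl hkl h1 h2 h3 h4 h5 h6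
    | exact FRQ.coreA S A B hAB i k j l hik hij hil (Ne.symm hjk) hkl hjl
        h2 h1 h3 ((hAB.symm_A k j).trans h4) h6 h5
    | exact FRQ.coreA S A B hAB i l j k hil hij hik (Ne.symm hjl) (Ne.symm hkl) hjk
        h3 h1 h2 ((hAB.symm_A l j).trans h5) ((hAB.symm_A l k).trans h6) h4
    | exact FRQ.coreA S A B hAB j k i l hjk (Ne.symm hij) hjl (Ne.symm hik) hkl hil
        h4 ((hAB.symm_A j i).trans h1) h5 ((hAB.symm_A k i).trans h2) h6 h3
    | exact FRQ.coreA S A B hAB j l i k hjl (Ne.symm hij) hjk (Ne.symm hil) (Ne.symm hkl) hik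
        h5 ((hAB.symm_A j i).trans h1) h4 ((hAB.symm_A l i).trans h3)
        ((hAB.symm_A l k).trans h6) h2
    | exact FRQ.coreA S A B hAB k l i j hkl (Ne.symm hik) (Ne.symm hjk) (Ne.symm hil)
        (Ne.symm hjl) hij h6 ((hAB.symm_A k i).trans h2) ((hAB.symm_A k j).trans h4)
        ((hAB.symm_A l i).trans h3) ((hAB.symm_A l j).trans h5) h1
  · intro hsum
    rcases hAB.zeroOne_B i j with h1 | h1 <;>
    rcases hAB.zeroOne_B i k with h2 | h2 <;>
    rcases hAB.zeroOne_B i l with h3 | h3 <;>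
    rcases hAB.zeroOne_B j k with h4 | h4 <;>
    rcases hAB.zeroOne_B j l with h5 | h5 <;>
    rcases hAB.zeroOne_B k l with h6 | h6 <;>
    first
    | omega
    | exact FRQ.coreB S A B hAB i j k l hij hik hil hjk hjl hkl h1 h2 h3 h4 h5 h6
    | exact FRQ.coreB S A B hAB i k j l hik hij hil (Ne.symm hjk) hkl hjl
        h2 h1 h3 ((hAB.symm_B k j).trans h4) h6 h5
    | exact FRQ.coreB S A B hAB i l j k hil hij hik (Ne.symm hjl) (Ne.symm hkl) hjk
        h3 h1 h2 ((hAB.symm_B l j).trans h5) ((hAB.symm_B l k).trans h6) h4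
    | exact FRQ.coreB S A B hAB j k i l hjk (Ne.symm hij) hjl (Ne.symm hik) hkl hil
        h4 ((hAB.symm_B j i).trans h1) h5 ((hAB.symm_B k i).trans h2) h6 h3
    | exact FRQ.coreB S A B hAB j l i k hjl (Ne.symm hij) hjk (Ne.symm hil) (Ne.symm hkl) hik
        h5 ((hAB.symm_B j i).trans h1) h4 ((hAB.symm_B l i).trans h3)
        ((hAB.symm_B l k).trans h6) h2
    | exact FRQ.coreB S A B hAB k l i j hkl (Ne.symm hik) (Ne.symm hjk) (Ne.symm hil)
        (Ne.symm hjl) hij h6 ((hAB.symm_B k i).trans h2) ((hAB.symm_B k j).trans h4)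
        ((hAB.symm_B l i).trans h3) ((hAB.symm_B l j).trans h5) h1
end

section
/- (Second Rule of Quadrilaterals) Let n ≥ 4 and let A and B be the z-matrix and w-matrix of a singular sequence and C = A + B. If i, j, k, l ∈ {1,…,n} are pairwise distinct and c_{ij} c_{jk} c_{kl} c_{li} ≠ 0, then none of the four sums a_{ij} + a_{kl}, a_{jk} + a_{li}, b_{ij} + b_{kl}, b_{jk} + b_{li} is equal to 1. -/
open Filter Finset

private lemma tendsto_zero_of_pow4 {f : ℕ → ℂ}
    (h : Tendsto (fun N => f N ^ 4) atTop (nhds 0)) :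
    Tendsto f atTop (nhds 0) := by
  rw [tendsto_zero_iff_norm_tendsto_zero] at h ⊢
  simp only [norm_pow] at h
  have h2 := h.rpow_const (p := (4 : ℝ)⁻¹) (Or.inr (by norm_num))
  have hkey : ∀ N, (‖f N‖ ^ (4:ℕ)) ^ ((4:ℝ)⁻¹) = ‖f N‖ := by
    intro N
    rw [← Real.rpow_natCast (‖f N‖) 4, ← Real.rpow_mul (norm_nonneg _)]
    norm_num
  simpa [hkey, Real.zero_rpow (by norm_num : ((4:ℝ)⁻¹) ≠ 0)] using h2

private lemma quartic_id {e : ℝ} (he : 0 < e) {zd wd d : ℂ}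
    (hnorm : d ^ 2 * zd * wd = 1) :
    ((e : ℂ)⁻¹ * zd) ^ 4 * ((e : ℂ) ^ 2 * (d ^ 3 * wd)) ^ 3
      = (e : ℂ) ^ 2 * (d ^ 3 * zd) := by
  have hec : (e : ℂ) ≠ 0 := Complex.ofReal_ne_zero.mpr he.ne'
  have h4 : (e:ℂ)^4 * (((e : ℂ)⁻¹ * zd) ^ 4 * ((e : ℂ) ^ 2 * (d ^ 3 * wd)) ^ 3)
      = (e:ℂ)^4 * ((e : ℂ) ^ 2 * (d ^ 3 * zd)) := by
    have hx : (e:ℂ)^4 * ((e : ℂ)⁻¹ * zd) ^ 4 = zd ^ 4 := by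
      field_simp
    calc (e:ℂ)^4 * (((e : ℂ)⁻¹ * zd) ^ 4 * ((e : ℂ) ^ 2 * (d ^ 3 * wd)) ^ 3)
        = ((e:ℂ)^4 * ((e : ℂ)⁻¹ * zd) ^ 4) * ((e : ℂ) ^ 2 * (d ^ 3 * wd)) ^ 3 := by ring
      _ = zd ^ 4 * ((e : ℂ) ^ 2 * (d ^ 3 * wd)) ^ 3 := by rw [hx]
      _ = (e:ℂ)^4 * ((e : ℂ) ^ 2 * (d ^ 3 * zd)) := by
          linear_combination ((e:ℂ)^6 * d^3 * zd * ((d^2*zd*wd)^2 + d^2*zd*wd + 1)) * hnorm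
  exact mul_left_cancel₀ (pow_ne_zero 4 hec) h4


private lemma quartic_id' {e : ℝ} (he : 0 < e) {zd wd d : ℂ}
    (hnorm : d ^ 2 * zd * wd = 1) : True := trivial

private lemma Gineq {e : ℝ} (he : 0 < e) {zd wd d : ℂ}
    (hnorm : d ^ 2 * zd * wd = 1)
    (h1 : ‖d ^ 3 * zd‖ ≤ e ^ (-2 : ℤ))
    (h2 : ‖d ^ 3 * wd‖ ≤ e ^ (-2 : ℤ)) :
    1 ≤ ‖(e : ℂ)⁻¹ * zd‖ * ‖(e : ℂ)⁻¹ * wd‖ := by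
  set a := ‖d‖ with ha
  set X := ‖zd‖ with hX
  set Y := ‖wd‖ with hY
  have ha0 : 0 ≤ a := norm_nonneg d
  have hX0 : 0 ≤ X := norm_nonneg zd
  have hY0 : 0 ≤ Y := norm_nonneg wd
  have habs : a ^ 2 * X * Y = 1 := by
    have := congrArg (‖·‖) hnorm
    simpa [norm_mul, norm_pow] using this
  have hB : e ^ (-2 : ℤ) = (e ^ 2)⁻¹ := by
    rw [zpow_neg]; norm_cast
  rw [hB] at h1 h2
  have h1' : a ^ 3 * X ≤ (e ^ 2)⁻¹ := by
    simpa [map_mul, map_pow] using h1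
  have h2' : a ^ 3 * Y ≤ (e ^ 2)⁻¹ := by
    simpa [map_mul, map_pow] using h2
  have he2 : (0:ℝ) < e ^ 2 := by positivity
  have step1 : a ^ 6 * X * Y ≤ (e ^ 2)⁻¹ * (e ^ 2)⁻¹ := by
    calc a ^ 6 * X * Y = (a ^ 3 * X) * (a ^ 3 * Y) := by ring
      _ ≤ (e ^ 2)⁻¹ * (e ^ 2)⁻¹ :=
        mul_le_mul h1' h2' (by positivity) (by positivity)
  have step2 : a ^ 4 ≤ (e ^ 2)⁻¹ * (e ^ 2)⁻¹ := by
    have : a ^ 6 * X * Y = a ^ 4 := by linear_combination a ^ 4 * habs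
    linarith [this ▸ step1]
  have step3 : a ^ 4 * (e ^ 2 * e ^ 2) ≤ 1 := by
    have := mul_le_mul_of_nonneg_right step2 (le_of_lt (by positivity : (0:ℝ) < e^2*e^2))
    calc a ^ 4 * (e ^ 2 * e ^ 2) ≤ (e ^ 2)⁻¹ * (e ^ 2)⁻¹ * (e ^ 2 * e ^ 2) := this
      _ = 1 := by field_simp
  have step4 : a ^ 2 * e ^ 2 ≤ 1 := by
    nlinarith [sq_nonneg (a ^ 2 * e ^ 2 - 1)]
  have step5 : e ^ 2 ≤ X * Y := by
    calc e ^ 2 = (a ^ 2 * X * Y) * e ^ 2 := by rw [habs]; ring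
      _ = (X * Y) * (a ^ 2 * e ^ 2) := by ring
      _ ≤ (X * Y) * 1 := mul_le_mul_of_nonneg_left step4 (by positivity)
      _ = X * Y := by ring
  have heq : ‖(e : ℂ)⁻¹ * zd‖ * ‖(e : ℂ)⁻¹ * wd‖
      = X * Y * (e ^ 2)⁻¹ := by
    rw [norm_mul, norm_mul, norm_inv, Complex.norm_real, Real.norm_eq_abs, abs_of_pos he, ← hX, ← hY, sq,
      mul_inv]
    ring
  rw [heq]
  calc (1:ℝ) = e ^ 2 * (e ^ 2)⁻¹ := by field_simp
    _ ≤ (X * Y) * (e ^ 2)⁻¹ := mul_le_mul_of_nonneg_right step5 (by positivity)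
    _ = X * Y * (e ^ 2)⁻¹ := by ring

private lemma lem_S0 {E : ℕ → ℝ} (hE : ∀ N, 0 < E N) {zd wd d : ℕ → ℂ}
    (hnorm : ∀ N, d N ^ 2 * zd N * wd N = 1)
    (hZ : Tendsto (fun N => (E N : ℂ) ^ 2 * (d N ^ 3 * zd N)) atTop (nhds 0))
    (hW : ∃ L, L ≠ 0 ∧ Tendsto (fun N => (E N : ℂ) ^ 2 * (d N ^ 3 * wd N)) atTop (nhds L)) :
    Tendsto (fun N => (E N : ℂ)⁻¹ * zd N) atTop (nhds 0) := by
  obtain ⟨L, hL0, hL⟩ := hW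
  apply tendsto_zero_of_pow4
  have hWne : ∀ N, (E N : ℂ) ^ 2 * (d N ^ 3 * wd N) ≠ 0 := by
    intro N h
    have h1 := hnorm N
    have h2 : d N ^ 3 * wd N = 0 := by
      rcases mul_eq_zero.mp h with h' | h'
      · exact absurd h' (pow_ne_zero 2 (Complex.ofReal_ne_zero.mpr (hE N).ne'))
      · exact h'
    rcases mul_eq_zero.mp h2 with h' | h'
    · have hd : d N = 0 := by
        simpa using pow_eq_zero_iff (n := 3) (by norm_num) |>.mp h'
      rw [hd] at h1; simp at h1
    · rw [h'] at h1; simp at h1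
  have heq : ∀ N, ((E N : ℂ)⁻¹ * zd N) ^ 4
      = ((E N : ℂ) ^ 2 * (d N ^ 3 * zd N)) / ((E N : ℂ) ^ 2 * (d N ^ 3 * wd N)) ^ 3 := by
    intro N
    rw [eq_div_iff (pow_ne_zero 3 (hWne N))]
    exact quartic_id (hE N) (hnorm N)
  have hdiv := hZ.div (hL.pow 3) (pow_ne_zero 3 hL0)
  have : Tendsto (fun N => ((E N : ℂ)⁻¹ * zd N) ^ 4) atTop (nhds ((0:ℂ) / L ^ 3)) :=
    hdiv.congr (fun N => (heq N).symm)
  simpa using this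

private lemma lem_Tbdd {E : ℕ → ℝ} (hE : ∀ N, 0 < E N) {zd wd d : ℕ → ℂ}
    (hnorm : ∀ N, d N ^ 2 * zd N * wd N = 1)
    (hbw : ∀ N, ‖d N ^ 3 * wd N‖ ≤ E N ^ (-2 : ℤ))
    (hZ : ∃ L, L ≠ 0 ∧ Tendsto (fun N => (E N : ℂ) ^ 2 * (d N ^ 3 * zd N)) atTop (nhds L)) :
    ∃ M : ℝ, ∀ᶠ N in atTop, ‖(E N : ℂ)⁻¹ * wd N‖ ≤ M := by
  obtain ⟨L, hL0, hL⟩ := hZ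
  have hLa : 0 < ‖L‖ := norm_pos_iff.mpr hL0
  refine ⟨max 1 (1 / (‖L‖ / 2) ^ 3), ?_⟩
  have hev : ∀ᶠ N in atTop,
      ‖L‖ / 2 < ‖(E N : ℂ) ^ 2 * (d N ^ 3 * zd N)‖ := by
    have hn := hL.norm
    have := hn.eventually (eventually_gt_nhds (by linarith : ‖L‖ / 2 < ‖L‖))
    simpa using this
  filter_upwards [hev] with N hN
  set T := ‖(E N : ℂ)⁻¹ * wd N‖ with hT
  set R := ‖(E N : ℂ) ^ 2 * (d N ^ 3 * zd N)‖ with hR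
  have hT0 : 0 ≤ T := norm_nonneg _
  have hR0 : 0 < R := lt_of_le_of_lt (by positivity) hN
  -- identity : T^4 * R^3 = |E^2 (d^3 wd)| ≤ 1
  have hid : ((E N : ℂ)⁻¹ * wd N) ^ 4 * ((E N : ℂ) ^ 2 * (d N ^ 3 * zd N)) ^ 3
      = (E N : ℂ) ^ 2 * (d N ^ 3 * wd N) := by
    exact quartic_id (hE N) (by linear_combination hnorm N)
  have habs : T ^ 4 * R ^ 3 = ‖(E N : ℂ) ^ 2 * (d N ^ 3 * wd N)‖ := by
    rw [hT, hR, ← norm_pow, ← norm_pow, ← norm_mul, hid]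
  have hb1 : ‖(E N : ℂ) ^ 2 * (d N ^ 3 * wd N)‖ ≤ 1 := by
    rw [norm_mul, norm_pow, Complex.norm_real, Real.norm_eq_abs, abs_of_pos (hE N)]
    have h2 := hbw N
    have hB : E N ^ (-2 : ℤ) = (E N ^ 2)⁻¹ := by rw [zpow_neg]; norm_cast
    rw [hB] at h2
    calc E N ^ 2 * ‖d N ^ 3 * wd N‖ ≤ E N ^ 2 * (E N ^ 2)⁻¹ :=
          mul_le_mul_of_nonneg_left h2 (by positivity)
      _ = 1 := mul_inv_cancel₀ (pow_pos (hE N) 2).ne'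
  have h4 : T ^ 4 ≤ 1 / (‖L‖ / 2) ^ 3 := by
    have hRc : (‖L‖ / 2) ^ 3 ≤ R ^ 3 :=
      pow_le_pow_left₀ (by positivity) (le_of_lt hN) 3
    have hTR : T ^ 4 * (‖L‖ / 2) ^ 3 ≤ 1 := by
      calc T ^ 4 * (‖L‖ / 2) ^ 3 ≤ T ^ 4 * R ^ 3 :=
            mul_le_mul_of_nonneg_left hRc (by positivity)
        _ ≤ 1 := by rw [habs]; exact hb1
    rw [le_div_iff₀ (by positivity)]
    exact hTR
  calc T ≤ max 1 (T ^ 4) := by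
        rcases le_total T 1 with h | h
        · exact le_max_of_le_left h
        · exact le_max_of_le_right (le_self_pow₀ h (by norm_num))
    _ ≤ max 1 (1 / (‖L‖ / 2) ^ 3) := max_le_max le_rfl h4

private lemma lem_contr {E : ℕ → ℝ} (hE : ∀ N, 0 < E N) {zd wd d : ℕ → ℂ}
    (hnorm : ∀ N, d N ^ 2 * zd N * wd N = 1)
    (hbz : ∀ N, ‖d N ^ 3 * zd N‖ ≤ E N ^ (-2 : ℤ))
    (hbw : ∀ N, ‖d N ^ 3 * wd N‖ ≤ E N ^ (-2 : ℤ))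
    (hS : Tendsto (fun N => (E N : ℂ)⁻¹ * zd N) atTop (nhds 0))
    (hT : ∃ M : ℝ, ∀ᶠ N in atTop, ‖(E N : ℂ)⁻¹ * wd N‖ ≤ M) :
    False := by
  obtain ⟨M, hM⟩ := hT
  have hG : ∀ N, 1 ≤ ‖(E N:ℂ)⁻¹ * zd N‖ * ‖(E N:ℂ)⁻¹ * wd N‖ :=
    fun N => Gineq (hE N) (hnorm N) (hbz N) (hbw N)
  have h0 : (0:ℝ) < (|M|+1)⁻¹ := by positivity
  have hS' : ∀ᶠ N in atTop, ‖(E N:ℂ)⁻¹ * zd N‖ < (|M|+1)⁻¹ := by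
    have hn := hS.norm
    simp only [norm_zero] at hn
    have := hn.eventually (eventually_lt_nhds h0)
    simpa using this
  obtain ⟨N, h1, h2⟩ := (hS'.and hM).exists
  have hg := hG N
  set s := ‖(E N:ℂ)⁻¹ * zd N‖
  set t := ‖(E N:ℂ)⁻¹ * wd N‖
  have hs0 : 0 ≤ s := norm_nonneg _
  have ht0 : 0 ≤ t := norm_nonneg _
  have htM : t ≤ |M| := h2.trans (le_abs_self M)
  have h3 : s * (|M| + 1) < 1 := by
    have := mul_lt_mul_of_pos_right h1 (show (0:ℝ) < |M| + 1 by positivity)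
    rwa [inv_mul_cancel₀ (by positivity : (|M|:ℝ)+1 ≠ 0)] at this
  nlinarith [abs_nonneg M]


private lemma key_s14 {n : ℕ} {E : ℕ → ℝ} (hE : ∀ N, 0 < E N)
    {zf wf : ℕ → Fin n → ℂ} {df : ℕ → Fin n → Fin n → ℂ}
    (hnorm : ∀ N, ∀ p q : Fin n, p ≠ q →
      df N p q ^ 2 * (zf N q - zf N p) * (wf N q - wf N p) = 1)
    (hbz : ∀ N, ∀ p q : Fin n, p ≠ q →
      ‖df N p q ^ 3 * (zf N p - zf N q)‖ ≤ E N ^ (-2 : ℤ))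
    (hbw : ∀ N, ∀ p q : Fin n, p ≠ q →
      ‖df N p q ^ 3 * (wf N p - wf N q)‖ ≤ E N ^ (-2 : ℤ))
    (hconvZ : ∀ p q : Fin n, p ≠ q → ∃ L, Tendsto
      (fun N => (E N : ℂ) ^ 2 * (df N p q ^ 3 * (zf N p - zf N q))) atTop (nhds L))
    (hconvW : ∀ p q : Fin n, p ≠ q → ∃ L, Tendsto
      (fun N => (E N : ℂ) ^ 2 * (df N p q ^ 3 * (wf N p - wf N q))) atTop (nhds L))
    {i j k l : Fin n}
    (hij : i ≠ j) (hik : i ≠ k) (hjk : j ≠ k) (hjl : j ≠ l) (hkl : k ≠ l) (hli : l ≠ i)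
    (ha1 : ¬ Tendsto (fun N => (E N : ℂ) ^ 2 * (df N i j ^ 3 * (zf N i - zf N j))) atTop (nhds 0))
    (ha3 : Tendsto (fun N => (E N : ℂ) ^ 2 * (df N k l ^ 3 * (zf N k - zf N l))) atTop (nhds 0))
    (hb3 : ¬ Tendsto (fun N => (E N : ℂ) ^ 2 * (df N k l ^ 3 * (wf N k - wf N l))) atTop (nhds 0))
    (hC2 : ¬ Tendsto (fun N => (E N : ℂ) ^ 2 * (df N j k ^ 3 * (zf N j - zf N k))) atTop (nhds 0) ∨
           ¬ Tendsto (fun N => (E N : ℂ) ^ 2 * (df N j k ^ 3 * (wf N j - wf N k))) atTop (nhds 0))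
    (hC4 : ¬ Tendsto (fun N => (E N : ℂ) ^ 2 * (df N l i ^ 3 * (zf N l - zf N i))) atTop (nhds 0) ∨
           ¬ Tendsto (fun N => (E N : ℂ) ^ 2 * (df N l i ^ 3 * (wf N l - wf N i))) atTop (nhds 0)) :
    False := by
  have normd : ∀ p q : Fin n, p ≠ q → ∀ N,
      df N p q ^ 2 * (zf N p - zf N q) * (wf N p - wf N q) = 1 :=
    fun p q hpq N => by linear_combination hnorm N p q hpq
  have S0 : ∀ p q : Fin n, p ≠ q →
      Tendsto (fun N => (E N:ℂ)^2 * (df N p q ^3 * (zf N p - zf N q))) atTop (nhds 0) →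
      ¬ Tendsto (fun N => (E N:ℂ)^2 * (df N p q ^3 * (wf N p - wf N q))) atTop (nhds 0) →
      Tendsto (fun N => (E N:ℂ)⁻¹ * (zf N p - zf N q)) atTop (nhds 0) := by
    intro p q hpq hz hw
    obtain ⟨L, hL⟩ := hconvW p q hpq
    exact lem_S0 hE (normd p q hpq) hz ⟨L, fun h0 => hw (by rwa [h0] at hL), hL⟩
  have Tb : ∀ p q : Fin n, p ≠ q →
      ¬ Tendsto (fun N => (E N:ℂ)^2 * (df N p q ^3 * (zf N p - zf N q))) atTop (nhds 0) →
      ∃ M, ∀ᶠ N in atTop, ‖(E N:ℂ)⁻¹ * (wf N p - wf N q)‖ ≤ M := by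
    intro p q hpq hz
    obtain ⟨L, hL⟩ := hconvZ p q hpq
    exact lem_Tbdd hE (normd p q hpq) (fun N => hbw N p q hpq)
      ⟨L, fun h0 => hz (by rwa [h0] at hL), hL⟩
  have contr : ∀ p q : Fin n, p ≠ q →
      Tendsto (fun N => (E N:ℂ)⁻¹ * (zf N p - zf N q)) atTop (nhds 0) →
      (∃ M, ∀ᶠ N in atTop, ‖(E N:ℂ)⁻¹ * (wf N p - wf N q)‖ ≤ M) → False :=
    fun p q hpq hS hT =>
      lem_contr hE (normd p q hpq) (fun N => hbz N p q hpq) (fun N => hbw N p q hpq) hS hT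
  have Tadd : ∀ {f g : ℕ → ℂ}, (∃ M, ∀ᶠ N in atTop, ‖f N‖ ≤ M) →
      (∃ M, ∀ᶠ N in atTop, ‖g N‖ ≤ M) →
      ∃ M, ∀ᶠ N in atTop, ‖f N + g N‖ ≤ M := by
    rintro f g ⟨M1, h1⟩ ⟨M2, h2⟩
    exact ⟨M1 + M2, by
      filter_upwards [h1, h2] with N a b
      exact (norm_add_le _ _).trans (add_le_add a b)⟩
  have Tcongr : ∀ {f g : ℕ → ℂ}, (∀ N, g N = f N ∨ g N = -(f N)) →
      (∃ M, ∀ᶠ N in atTop, ‖f N‖ ≤ M) →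
      ∃ M, ∀ᶠ N in atTop, ‖g N‖ ≤ M := by
    rintro f g he ⟨M, hM⟩
    refine ⟨M, ?_⟩
    filter_upwards [hM] with N h
    rcases he N with h' | h' <;> rw [h'] <;> simpa using h
  have hS3 : Tendsto (fun N => (E N:ℂ)⁻¹ * (zf N k - zf N l)) atTop (nhds 0) :=
    S0 k l hkl ha3 hb3
  have hT1 := Tb i j hij ha1
  by_cases h2 : Tendsto (fun N => (E N:ℂ)^2 * (df N j k ^3 * (zf N j - zf N k))) atTop (nhds 0) <;>
    by_cases h4 : Tendsto (fun N => (E N:ℂ)^2 * (df N l i ^3 * (zf N l - zf N i))) atTop (nhds 0)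
  · -- a2 = 0, a4 = 0 : S_ij → 0, T_ij bounded
    have hw2 := hC2.resolve_left (not_not_intro h2)
    have hw4 := hC4.resolve_left (not_not_intro h4)
    have hS2 := S0 j k hjk h2 hw2
    have hS4 := S0 l i hli h4 hw4
    have h' := ((hS2.add hS3).add hS4).neg
    rw [show -((0:ℂ)+0+0) = 0 by ring] at h'
    exact contr i j hij (h'.congr (fun N => by ring)) hT1
  · -- a2 = 0, a4 = 1 : pair (j,l)
    have hw2 := hC2.resolve_left (not_not_intro h2)
    have hS2 := S0 j k hjk h2 hw2
    have hT4 := Tb l i hli h4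
    have h' := hS2.add hS3
    rw [show ((0:ℂ)+0) = 0 by ring] at h'
    have hSjl : Tendsto (fun N => (E N:ℂ)⁻¹ * (zf N j - zf N l)) atTop (nhds 0) :=
      h'.congr (fun N => by ring)
    have hTjl := Tcongr (g := fun N => (E N:ℂ)⁻¹ * (wf N j - wf N l))
      (f := fun N => ((E N:ℂ)⁻¹ * (wf N l - wf N i)) + ((E N:ℂ)⁻¹ * (wf N i - wf N j)))
      (fun N => Or.inr (by ring)) (Tadd hT4 hT1)
    exact contr j l hjl hSjl hTjl
  · -- a2 = 1, a4 = 0 : pair (i,k)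
    have hw4 := hC4.resolve_left (not_not_intro h4)
    have hS4 := S0 l i hli h4 hw4
    have hT2 := Tb j k hjk h2
    have h' := (hS3.add hS4).neg
    rw [show -((0:ℂ)+0) = 0 by ring] at h'
    have hSik : Tendsto (fun N => (E N:ℂ)⁻¹ * (zf N i - zf N k)) atTop (nhds 0) :=
      h'.congr (fun N => by ring)
    have hTik := Tcongr (g := fun N => (E N:ℂ)⁻¹ * (wf N i - wf N k))
      (f := fun N => ((E N:ℂ)⁻¹ * (wf N i - wf N j)) + ((E N:ℂ)⁻¹ * (wf N j - wf N k)))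
      (fun N => Or.inl (by ring)) (Tadd hT1 hT2)
    exact contr i k hik hSik hTik
  · -- a2 = 1, a4 = 1 : pair (k,l)
    have hT2 := Tb j k hjk h2
    have hT4 := Tb l i hli h4
    have hTkl := Tcongr (g := fun N => (E N:ℂ)⁻¹ * (wf N k - wf N l))
      (f := fun N => (((E N:ℂ)⁻¹ * (wf N i - wf N j)) + ((E N:ℂ)⁻¹ * (wf N j - wf N k))) + ((E N:ℂ)⁻¹ * (wf N l - wf N i)))
      (fun N => Or.inr (by ring)) (Tadd (Tadd hT1 hT2) hT4)
    exact contr k l hkl hS3 hTkl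


theorem second_rule_of_quadrilaterals (n : ℕ) (hn : 4 ≤ n) (m : Fin n → ℂ)
    (hm : ∀ I : Finset (Fin n), I.Nonempty → ∑ k ∈ I, m k ≠ 0)
    (S : SingularSeq n m) (A B : Matrix (Fin n) (Fin n) ℕ)
    (hAB : IsZWMatrices S A B) :
    ∀ i j k l : Fin n, i ≠ j → i ≠ k → i ≠ l → j ≠ k → j ≠ l → k ≠ l →
      (A i j + B i j) * (A j k + B j k) * (A k l + B k l) * (A l i + B l i) ≠ 0 →
      A i j + A k l ≠ 1 ∧ A j k + A l i ≠ 1 ∧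
        B i j + B k l ≠ 1 ∧ B j k + B l i ≠ 1 := by
  intro i j k l hij hik hil hjk hjl hkl hc
  classical
  have hE : ∀ N, 0 < S.eps N := S.eps_pos
  have hnorm0 : ∀ N, ∀ p q : Fin n, p ≠ q →
      S.delta N p q ^ 2 * (S.z N q - S.z N p) * (S.w N q - S.w N p) = 1 :=
    fun N p q h => S.normalize N p q h
  have hnorm0' : ∀ N, ∀ p q : Fin n, p ≠ q →
      S.delta N p q ^ 2 * (S.w N q - S.w N p) * (S.z N q - S.z N p) = 1 :=
    fun N p q h => by linear_combination S.normalize N p q h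
  have hbz0 : ∀ N, ∀ p q : Fin n, p ≠ q →
      ‖S.delta N p q ^ 3 * (S.z N p - S.z N q)‖ ≤ S.eps N ^ (-2 : ℤ) := by
    intro N p q h
    have := (S.maxZ N).2 (Or.inr ⟨p, q, h, rfl⟩)
    simpa [Zq] using this
  have hbw0 : ∀ N, ∀ p q : Fin n, p ≠ q →
      ‖S.delta N p q ^ 3 * (S.w N p - S.w N q)‖ ≤ S.eps N ^ (-2 : ℤ) := by
    intro N p q h
    have := (S.maxW N).2 (Or.inr ⟨p, q, h, rfl⟩)
    simpa [Zq] using this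
  have hconvZ0 : ∀ p q : Fin n, p ≠ q → ∃ L, Tendsto
      (fun N => (S.eps N : ℂ) ^ 2 * (S.delta N p q ^ 3 * (S.z N p - S.z N q))) atTop (nhds L) := by
    intro p q h
    simpa [Zq] using S.conv_Z p q h
  have hconvW0 : ∀ p q : Fin n, p ≠ q → ∃ L, Tendsto
      (fun N => (S.eps N : ℂ) ^ 2 * (S.delta N p q ^ 3 * (S.w N p - S.w N q))) atTop (nhds L) := by
    intro p q h
    simpa [Zq] using S.conv_W p q h
  have hA1 : ∀ p q : Fin n, p ≠ q → A p q = 1 →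
      ¬ Tendsto (fun N => (S.eps N : ℂ) ^ 2 * (S.delta N p q ^ 3 * (S.z N p - S.z N q)))
        atTop (nhds 0) := by
    intro p q h h1
    have := (hAB.off_A p q h).mp h1
    simpa [Zq] using this
  have hA0 : ∀ p q : Fin n, p ≠ q → A p q = 0 →
      Tendsto (fun N => (S.eps N : ℂ) ^ 2 * (S.delta N p q ^ 3 * (S.z N p - S.z N q)))
        atTop (nhds 0) := by
    intro p q h h0
    by_contra hcon
    have h1 : A p q = 1 := (hAB.off_A p q h).mpr (by simpa [Zq] using hcon)
    omega
  have hB1 : ∀ p q : Fin n, p ≠ q → B p q = 1 →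
      ¬ Tendsto (fun N => (S.eps N : ℂ) ^ 2 * (S.delta N p q ^ 3 * (S.w N p - S.w N q)))
        atTop (nhds 0) := by
    intro p q h h1
    have := (hAB.off_B p q h).mp h1
    simpa [Zq] using this
  have hB0 : ∀ p q : Fin n, p ≠ q → B p q = 0 →
      Tendsto (fun N => (S.eps N : ℂ) ^ 2 * (S.delta N p q ^ 3 * (S.w N p - S.w N q)))
        atTop (nhds 0) := by
    intro p q h h0
    by_contra hcon
    have h1 : B p q = 1 := (hAB.off_B p q h).mpr (by simpa [Zq] using hcon)
    omega
  have hedge : ∀ p q : Fin n, p ≠ q → A p q + B p q ≠ 0 →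
      (¬ Tendsto (fun N => (S.eps N : ℂ) ^ 2 * (S.delta N p q ^ 3 * (S.z N p - S.z N q)))
        atTop (nhds 0)) ∨
      (¬ Tendsto (fun N => (S.eps N : ℂ) ^ 2 * (S.delta N p q ^ 3 * (S.w N p - S.w N q)))
        atTop (nhds 0)) := by
    intro p q h hne
    rcases hAB.zeroOne_A p q with h0 | h1
    · rcases hAB.zeroOne_B p q with hb0 | hb1
      · omega
      · exact Or.inr (hB1 p q h hb1)
    · exact Or.inl (hA1 p q h h1)
  have hcf := hc
  simp only [ne_eq, mul_eq_zero, not_or] at hcf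
  obtain ⟨⟨⟨hc1, hc2⟩, hc3⟩, hc4⟩ := hcf
  have hji := hij.symm
  have hki := hik.symm
  have hli := hil.symm
  have hkj := hjk.symm
  have hlj := hjl.symm
  have hlk := hkl.symm
  refine ⟨?_, ?_, ?_, ?_⟩
  · intro hsum
    rcases hAB.zeroOne_A i j with ha | ha <;> rcases hAB.zeroOne_A k l with hb | hb
    · omega
    · -- A i j = 0, A k l = 1 : quadrilateral (k, l, i, j)
      have hBij : B i j = 1 := by rcases hAB.zeroOne_B i j with h | h <;> omega
      exact key_s14 hE hnorm0 hbz0 hbw0 hconvZ0 hconvW0 hkl hki hli hlj hij hjk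
        (hA1 k l hkl hb) (hA0 i j hij ha) (hB1 i j hij hBij)
        (hedge l i hli hc4) (hedge j k hjk hc2)
    · -- A i j = 1, A k l = 0 : quadrilateral (i, j, k, l)
      have hBkl : B k l = 1 := by rcases hAB.zeroOne_B k l with h | h <;> omega
      exact key_s14 hE hnorm0 hbz0 hbw0 hconvZ0 hconvW0 hij hik hjk hjl hkl hli
        (hA1 i j hij ha) (hA0 k l hkl hb) (hB1 k l hkl hBkl)
        (hedge j k hjk hc2) (hedge l i hli hc4)
    · omega
  · intro hsum
    rcases hAB.zeroOne_A j k with ha | ha <;> rcases hAB.zeroOne_A l i with hb | hb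
    · omega
    · -- A j k = 0, A l i = 1 : quadrilateral (l, i, j, k)
      have hBjk : B j k = 1 := by rcases hAB.zeroOne_B j k with h | h <;> omega
      exact key_s14 hE hnorm0 hbz0 hbw0 hconvZ0 hconvW0 hli hlj hij hik hjk hkl
        (hA1 l i hli hb) (hA0 j k hjk ha) (hB1 j k hjk hBjk)
        (hedge i j hij hc1) (hedge k l hkl hc3)
    · -- A j k = 1, A l i = 0 : quadrilateral (j, k, l, i)
      have hBli : B l i = 1 := by rcases hAB.zeroOne_B l i with h | h <;> omega
      exact key_s14 hE hnorm0 hbz0 hbw0 hconvZ0 hconvW0 hjk hjl hkl hki hli hij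
        (hA1 j k hjk ha) (hA0 l i hli hb) (hB1 l i hli hBli)
        (hedge k l hkl hc3) (hedge i j hij hc1)
    · omega
  · intro hsum
    rcases hAB.zeroOne_B i j with ha | ha <;> rcases hAB.zeroOne_B k l with hb | hb
    · omega
    · have hAij : A i j = 1 := by rcases hAB.zeroOne_A i j with h | h <;> omega
      exact key_s14 hE hnorm0' hbw0 hbz0 hconvW0 hconvZ0 hkl hki hli hlj hij hjk
        (hB1 k l hkl hb) (hB0 i j hij ha) (hA1 i j hij hAij)
        ((hedge l i hli hc4).symm) ((hedge j k hjk hc2).symm)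
    · have hAkl : A k l = 1 := by rcases hAB.zeroOne_A k l with h | h <;> omega
      exact key_s14 hE hnorm0' hbw0 hbz0 hconvW0 hconvZ0 hij hik hjk hjl hkl hli
        (hB1 i j hij ha) (hB0 k l hkl hb) (hA1 k l hkl hAkl)
        ((hedge j k hjk hc2).symm) ((hedge l i hli hc4).symm)
    · omega
  · intro hsum
    rcases hAB.zeroOne_B j k with ha | ha <;> rcases hAB.zeroOne_B l i with hb | hb
    · omega
    · have hAjk : A j k = 1 := by rcases hAB.zeroOne_A j k with h | h <;> omega
      exact key_s14 hE hnorm0' hbw0 hbz0 hconvW0 hconvZ0 hli hlj hij hik hjk hkl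
        (hB1 l i hli hb) (hB0 j k hjk ha) (hA1 j k hjk hAjk)
        ((hedge i j hij hc1).symm) ((hedge k l hkl hc3).symm)
    · have hAli : A l i = 1 := by rcases hAB.zeroOne_A l i with h | h <;> omega
      exact key_s14 hE hnorm0' hbw0 hbz0 hconvW0 hconvZ0 hjk hjl hkl hki hli hij
        (hB1 j k hjk ha) (hB0 l i hli hb) (hA1 l i hli hAli)
        ((hedge k l hkl hc3).symm) ((hedge i j hij hc1).symm)
    · omega
end
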